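/- arXiv:2108.03210 — 4 statements merged into one kernel-verified Lean document; each statement's English description precedes it below -/
import Mathlib

section
/- In a prediction space, if the predictive distribution F is auto-calibrated, then F is both marginally calibrated and probabilistically calibrated. -/
open MeasureTheory ProbabilityTheory

noncomputable section

/-- The cumulative distribution function of a measure `G` on `ℝ`, evaluated at `y`. -/
def cdfAt (G : Measure ℝ) (y : ℝ) : ℝ := (G (Set.Iic y)).toReal

/-- The left limit `G(y−)` of the CDF of `G` at `y`. -/
def cdfLt (G : Measure ℝ) (y : ℝ) : ℝ := (G (Set.Iio y)).toReal

/-- The lower `α`-quantile `q_α^-(G) = inf {x : G(x) ≥ α}`. -/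
def lowerQuantile (G : Measure ℝ) (α : ℝ) : ℝ := sInf {x : ℝ | α ≤ cdfAt G x}

/-- The upper `α`-quantile `q_α^+(G) = sup {x : G(x−) ≤ α}`. -/
def upperQuantile (G : Measure ℝ) (α : ℝ) : ℝ := sSup {x : ℝ | cdfLt G x ≤ α}

variable {Ω : Type*} [MeasurableSpace Ω]

/-- The (randomized) probability integral transform `Z_F = F(Y−) + U (F(Y) − F(Y−))`. -/
def PIT (F : Ω → Measure ℝ) (Y U : Ω → ℝ) (ω : Ω) : ℝ :=
  cdfLt (F ω) (Y ω) + U ω * (cdfAt (F ω) (Y ω) - cdfLt (F ω) (Y ω))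

/-- The uniform distribution on `[0,1]`. -/
def unif01 : Measure ℝ := volume.restrict (Set.Icc (0:ℝ) 1)

/-- A prediction space: a probability space carrying a random probability measure `F` on `ℝ`
(the predictive distribution), an outcome `Y`, and a uniform random variable `U` that is
independent of the σ-algebra generated by `F` and `Y`. -/
structure IsPredictionSpace (μ : Measure Ω) (F : Ω → Measure ℝ) (Y U : Ω → ℝ) : Prop where
  isProb : IsProbabilityMeasure μ
  probF : ∀ ω, IsProbabilityMeasure (F ω)
  measF : Measurable F
  measY : Measurable Y
  measU : Measurable U
  unifU : μ.map U = unif01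
  indepU : Indep (MeasurableSpace.comap U inferInstance)
    (MeasurableSpace.comap F inferInstance ⊔ MeasurableSpace.comap Y inferInstance) μ

/-- `F` is auto-calibrated: `F(y) = Q(Y ≤ y | σ(F))` a.s. for every `y`. -/
def AutoCalibrated (μ : Measure Ω) (F : Ω → Measure ℝ) (Y : Ω → ℝ) : Prop :=
  ∀ y : ℝ, (fun ω => cdfAt (F ω) y)
    =ᵐ[μ] μ[Set.indicator {ω | Y ω ≤ y} (fun _ => (1:ℝ)) | MeasurableSpace.comap F inferInstance]

/-- `F` is probabilistically calibrated: the PIT is uniform on `[0,1]`. -/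
def ProbCalibrated (μ : Measure Ω) (F : Ω → Measure ℝ) (Y U : Ω → ℝ) : Prop :=
  μ.map (PIT F Y U) = unif01

/-- `F` is marginally calibrated: `E[F(y)] = Q(Y ≤ y)` for every `y`. -/
def MargCalibrated (μ : Measure Ω) (F : Ω → Measure ℝ) (Y : Ω → ℝ) : Prop :=
  ∀ y : ℝ, ∫ ω, cdfAt (F ω) y ∂μ = (μ {ω | Y ω ≤ y}).toReal

/-- `F` is CEP calibrated: `Q(Z_F ≤ α | q_α^-(F)) = α` a.s. for every `α ∈ (0,1)`. -/
def CEPCalibrated (μ : Measure Ω) (F : Ω → Measure ℝ) (Y U : Ω → ℝ) : Prop :=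
  ∀ α ∈ Set.Ioo (0:ℝ) 1,
    μ[Set.indicator {ω | PIT F Y U ω ≤ α} (fun _ => (1:ℝ)) |
      MeasurableSpace.comap (fun ω => lowerQuantile (F ω) α) inferInstance]
      =ᵐ[μ] fun _ => α

/-- `F` is threshold calibrated: `Q(Y ≤ t | F(t)) = F(t)` a.s. for every `t`. -/
def ThreshCalibrated (μ : Measure Ω) (F : Ω → Measure ℝ) (Y : Ω → ℝ) : Prop :=
  ∀ t : ℝ,
    μ[Set.indicator {ω | Y ω ≤ t} (fun _ => (1:ℝ)) |
      MeasurableSpace.comap (fun ω => cdfAt (F ω) t) inferInstance]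
      =ᵐ[μ] fun ω => cdfAt (F ω) t

/-- An identification function: measurable, increasing and left-continuous in its
first argument. -/
structure IsIdentificationFunction (V : ℝ → ℝ → ℝ) : Prop where
  meas : Measurable (Function.uncurry V)
  mono : ∀ y : ℝ, Monotone fun x => V x y
  leftCont : ∀ y x : ℝ, ContinuousWithinAt (fun x => V x y) (Set.Iic x) x

/-- Lower bound `T^-(G) = sup {x : ∫ V(x,y) dG(y) < 0}` of the functional induced by `V`. -/
def Tminus (V : ℝ → ℝ → ℝ) (G : Measure ℝ) : ℝ := sSup {x : ℝ | ∫ y, V x y ∂G < 0}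

/-- Upper bound `T^+(G) = inf {x : ∫ V(x,y) dG(y) > 0}` of the functional induced by `V`. -/
def Tplus (V : ℝ → ℝ → ℝ) (G : Measure ℝ) : ℝ := sInf {x : ℝ | 0 < ∫ y, V x y ∂G}

/-- `V` is of prediction error form `V(x,y) = v(x−y)`. -/
def PredErrorForm (V : ℝ → ℝ → ℝ) : Prop :=
  ∃ v : ℝ → ℝ, Monotone v ∧ (∀ x : ℝ, ContinuousWithinAt v (Set.Iic x) x) ∧
    (∃ r : ℝ, 0 < r ∧ v (-r) < 0 ∧ 0 < v r) ∧ ∀ x y : ℝ, V x y = v (x - y)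

/-- `V` is of the form `V(x,y) = x − T(δ_y)` for a singleton-valued functional `T`. -/
def DiracSingletonForm (V : ℝ → ℝ → ℝ) : Prop :=
  (∀ y : ℝ, Tminus V (Measure.dirac y) = Tplus V (Measure.dirac y)) ∧
  ∀ x y : ℝ, V x y = x - Tminus V (Measure.dirac y)

/-- Assumption (V): `V` induces the functional on a convex class `𝓕₀ ⊇ 𝓕` of probability
measures containing all Dirac measures, and `V` is of prediction error form or of the
form `V(x,y) = x − T(δ_y)` for a singleton-valued `T`. -/
structure AssumptionV (V : ℝ → ℝ → ℝ) (𝓕 : Set (Measure ℝ)) : Prop where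
  inducing : ∃ 𝓕₀ : Set (Measure ℝ), 𝓕 ⊆ 𝓕₀ ∧ (∀ G ∈ 𝓕₀, IsProbabilityMeasure G) ∧
    (∀ y : ℝ, Measure.dirac y ∈ 𝓕₀) ∧
    (∀ G₁ ∈ 𝓕₀, ∀ G₂ ∈ 𝓕₀, ∀ p : ℝ, 0 ≤ p → p ≤ 1 →
      ENNReal.ofReal p • G₁ + ENNReal.ofReal (1 - p) • G₂ ∈ 𝓕₀) ∧
    ∀ G ∈ 𝓕₀, ∀ x : ℝ, Integrable (fun y => V x y) G
  form : PredErrorForm V ∨ DiracSingletonForm V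

/-- The pair `(T^-(F), T^+(F))` of the interval-valued functional applied to the
random predictive distribution. -/
def TpairOf (V : ℝ → ℝ → ℝ) (F : Ω → Measure ℝ) (ω : Ω) : ℝ × ℝ :=
  (Tminus V (F ω), Tplus V (F ω))

/-- Conditional `T`-calibration of the predictive distribution `F`:
`T(L(Y | T(F))) = T(F)` almost surely. -/
def CondTCalibrated (μ : Measure Ω) [IsFiniteMeasure μ] (V : ℝ → ℝ → ℝ)
    (F : Ω → Measure ℝ) (Y : Ω → ℝ) : Prop :=
  ∀ᵐ ω ∂μ,
    Tminus V (condDistrib Y (TpairOf V F) μ (TpairOf V F ω)) = Tminus V (F ω) ∧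
    Tplus V (condDistrib Y (TpairOf V F) μ (TpairOf V F ω)) = Tplus V (F ω)

/-- Unconditional `T`-calibration of the predictive distribution `F`. -/
def UncondTCalibrated (μ : Measure Ω) (V : ℝ → ℝ → ℝ)
    (F : Ω → Measure ℝ) (Y : Ω → ℝ) : Prop :=
  ∀ ε : ℝ, 0 < ε →
    (∫ ω, V (Tplus V (F ω) - ε) (Y ω) ∂μ) ≤ 0 ∧
    0 ≤ ∫ ω, V (Tminus V (F ω) + ε) (Y ω) ∂μ

/-- Unconditional `T`-calibration of a single-valued point forecast `X`. -/
def UncondCalibratedPt (μ : Measure Ω) (V : ℝ → ℝ → ℝ) (X Y : Ω → ℝ) : Prop :=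
  ∀ ε : ℝ, 0 < ε →
    (∫ ω, V (X ω - ε) (Y ω) ∂μ) ≤ 0 ∧ 0 ≤ ∫ ω, V (X ω + ε) (Y ω) ∂μ

/-- The sets defining `T^-(G)` and `T^+(G)` are nonempty and bounded, so that the induced
functional is well defined and finite at `G`. -/
def TWellDefined (V : ℝ → ℝ → ℝ) (G : Measure ℝ) : Prop :=
  {x : ℝ | ∫ y, V x y ∂G < 0}.Nonempty ∧ BddAbove {x : ℝ | ∫ y, V x y ∂G < 0} ∧
  {x : ℝ | 0 < ∫ y, V x y ∂G}.Nonempty ∧ BddBelow {x : ℝ | 0 < ∫ y, V x y ∂G}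

/-- The elementary loss `S_η(x,y) = (1{η ≤ x} − 1{η ≤ y}) V(η,y)`. -/
def elemLoss (V : ℝ → ℝ → ℝ) (η x y : ℝ) : ℝ :=
  ((if η ≤ x then (1:ℝ) else 0) - if η ≤ y then (1:ℝ) else 0) * V η y

/-- `S` has mixture (Choquet) form with respect to the identification function `V`. -/
def MixtureForm (V S : ℝ → ℝ → ℝ) : Prop :=
  ∃ H : Measure ℝ, IsLocallyFiniteMeasure H ∧
    ∀ x y : ℝ, S x y = ∫ η, elemLoss V η x y ∂H

/-- `S` is a canonical loss for the functional induced by `V`. -/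
def IsCanonicalLoss (V S : ℝ → ℝ → ℝ) : Prop :=
  (∀ x y : ℝ, 0 ≤ S x y) ∧
  ∃ a : ℝ, 0 < a ∧ ∃ b : ℝ → ℝ, Measurable b ∧
    ∀ x y : ℝ, S x y = a * (∫ η, elemLoss V η x y) + b y

/-- `S` is a consistent scoring function for the functional induced by `V` on the class `𝓕`. -/
def ConsistentFor (S V : ℝ → ℝ → ℝ) (𝓕 : Set (Measure ℝ)) : Prop :=
  ∀ G ∈ 𝓕, ∀ t ∈ Set.Icc (Tminus V G) (Tplus V G), ∀ x : ℝ,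
    ∫ y, S t y ∂G ≤ ∫ y, S x y ∂G

/-- `S` is a strictly consistent scoring function for the functional induced by `V` on `𝓕`. -/
def StrictlyConsistentFor (S V : ℝ → ℝ → ℝ) (𝓕 : Set (Measure ℝ)) : Prop :=
  ConsistentFor S V 𝓕 ∧
  ∀ G ∈ 𝓕, ∀ t ∈ Set.Icc (Tminus V G) (Tplus V G), ∀ x : ℝ,
    x ∉ Set.Icc (Tminus V G) (Tplus V G) → ∫ y, S t y ∂G < ∫ y, S x y ∂G

/-- The empirical distribution of the outcomes `y i`, `i ∈ s`. -/
def empOn {n : ℕ} (y : Fin n → ℝ) (s : Finset (Fin n)) : Measure ℝ :=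
  (s.card : ENNReal)⁻¹ • ∑ i ∈ s, Measure.dirac (y i)

/-- A locally bounded real function of a real variable. -/
def LocallyBdd (f : ℝ → ℝ) : Prop :=
  ∀ η₀ : ℝ, ∃ ε : ℝ, 0 < ε ∧ ∃ C : ℝ, ∀ η : ℝ, |η - η₀| < ε → |f η| ≤ C

/-- All CDFs in the class `𝓕` are continuous and strictly increasing on a shared
support interval. -/
def CSI (𝓕 : Set (Measure ℝ)) : Prop :=
  ∃ S : Set ℝ, S.Nonempty ∧ S.OrdConnected ∧ ∀ G ∈ 𝓕,
    Continuous (cdfAt G) ∧ StrictMonoOn (cdfAt G) S ∧ G Sᶜ = 0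

/-- The conditioning variable for quantile calibration at level `α`: the interval of
`α`-quantiles, represented by its endpoints. -/
def qPairOf (F : Ω → Measure ℝ) (α : ℝ) (ω : Ω) : ℝ × ℝ :=
  (lowerQuantile (F ω) α, upperQuantile (F ω) α)

/-- `F` is quantile calibrated: for every `α ∈ (0,1)`,
`q_α(L(Y | q_α(F))) = q_α(F)` almost surely. -/
def QuantileCalibrated (μ : Measure Ω) [IsFiniteMeasure μ]
    (F : Ω → Measure ℝ) (Y : Ω → ℝ) : Prop :=
  ∀ α ∈ Set.Ioo (0:ℝ) 1, ∀ᵐ ω ∂μ,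
    lowerQuantile (condDistrib Y (qPairOf F α) μ (qPairOf F α ω)) α
      = lowerQuantile (F ω) α ∧
    upperQuantile (condDistrib Y (qPairOf F α) μ (qPairOf F α ω)) α
      = upperQuantile (F ω) α


/-! ### Auxiliary lemmas -/

section Aux

open Set Filter Topology
open scoped ENNReal

instance unif01_isProbabilityMeasure : IsProbabilityMeasure unif01 := by
  constructor
  rw [unif01, Measure.restrict_apply MeasurableSet.univ, Set.univ_inter, Real.volume_Icc]
  norm_num

lemma unif01_apply (s : Set ℝ) : unif01 s = volume (s ∩ Set.Icc (0:ℝ) 1) :=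
  Measure.restrict_apply' measurableSet_Icc

lemma psi_one {a b α : ℝ} (hab : a ≤ b) (hbα : b ≤ α) :
    unif01 {u : ℝ | a + u * (b - a) ≤ α} = 1 := by
  rw [unif01_apply]
  have h : {u : ℝ | a + u * (b - a) ≤ α} ∩ Set.Icc (0:ℝ) 1 = Set.Icc (0:ℝ) 1 := by
    apply Set.inter_eq_right.mpr
    intro u hu
    rcases hu with ⟨hu0, hu1⟩
    have : a + u * (b - a) ≤ b := by nlinarith
    exact le_trans this hbα
  rw [h, Real.volume_Icc]; norm_num

lemma psi_zero {a b α : ℝ} (hab : a ≤ b) (hαa : α < a) :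
    unif01 {u : ℝ | a + u * (b - a) ≤ α} = 0 := by
  rw [unif01_apply]
  have h : {u : ℝ | a + u * (b - a) ≤ α} ∩ Set.Icc (0:ℝ) 1 = ∅ := by
    ext u
    simp only [Set.mem_inter_iff, Set.mem_setOf_eq, Set.mem_Icc, Set.mem_empty_iff_false,
      iff_false, not_and, and_imp]
    intro hle hu0 _
    nlinarith
  rw [h, measure_empty]

lemma psi_mid {a b α : ℝ} (haα : a ≤ α) (hαb : α < b) :
    unif01 {u : ℝ | a + u * (b - a) ≤ α} = ENNReal.ofReal ((α - a) / (b - a)) := by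
  have hab : a < b := lt_of_le_of_lt haα hαb
  have hba : (0:ℝ) < b - a := by linarith
  set r := (α - a) / (b - a) with hr
  have hr0 : 0 ≤ r := div_nonneg (by linarith) hba.le
  have hr1 : r < 1 := (div_lt_one hba).mpr (by linarith)
  rw [unif01_apply]
  have h : {u : ℝ | a + u * (b - a) ≤ α} ∩ Set.Icc (0:ℝ) 1 = Set.Icc (0:ℝ) r := by
    ext u
    simp only [Set.mem_inter_iff, Set.mem_setOf_eq, Set.mem_Icc]
    constructor
    · rintro ⟨hle, hu0, hu1⟩
      refine ⟨hu0, ?_⟩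
      rw [hr, le_div_iff₀ hba]
      linarith
    · rintro ⟨hu0, hur⟩
      have hle : u * (b - a) ≤ α - a := by
        rw [hr, le_div_iff₀ hba] at hur
        linarith
      exact ⟨by linarith, hu0, by linarith [lt_of_le_of_lt hur hr1]⟩
  rw [h, Real.volume_Icc, sub_zero]

lemma cdfLt_le_cdfAt (G : Measure ℝ) [IsProbabilityMeasure G] (y : ℝ) :
    cdfLt G y ≤ cdfAt G y :=
  ENNReal.toReal_mono (measure_ne_top _ _) (measure_mono Set.Iio_subset_Iic_self)

lemma cdfAt_mono (G : Measure ℝ) [IsProbabilityMeasure G] {y z : ℝ} (h : y ≤ z) :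
    cdfAt G y ≤ cdfAt G z :=
  ENNReal.toReal_mono (measure_ne_top _ _) (measure_mono (Set.Iic_subset_Iic.mpr h))

lemma cdfAt_le_cdfLt (G : Measure ℝ) [IsProbabilityMeasure G] {y z : ℝ} (h : y < z) :
    cdfAt G y ≤ cdfLt G z :=
  ENNReal.toReal_mono (measure_ne_top _ _)
    (measure_mono (fun x hx => lt_of_le_of_lt hx h))

lemma measure_Iic_eq_ofReal_cdfAt (G : Measure ℝ) [IsProbabilityMeasure G] (y : ℝ) :
    G (Set.Iic y) = ENNReal.ofReal (cdfAt G y) :=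
  (ENNReal.ofReal_toReal (measure_ne_top _ _)).symm

lemma measure_Iio_eq_ofReal_cdfLt (G : Measure ℝ) [IsProbabilityMeasure G] (y : ℝ) :
    G (Set.Iio y) = ENNReal.ofReal (cdfLt G y) :=
  (ENNReal.ofReal_toReal (measure_ne_top _ _)).symm

/-- The deterministic randomized PIT: for a fixed probability measure `G` and
`α ∈ (0,1)`, the `G ⊗ unif01`-probability that the PIT is at most `α` equals `α`. -/
lemma det_PIT (G : Measure ℝ) [IsProbabilityMeasure G] {α : ℝ} (h0 : 0 < α) (h1 : α < 1) :
    ∫⁻ y, unif01 {u : ℝ | cdfLt G y + u * (cdfAt G y - cdfLt G y) ≤ α} ∂G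
      = ENNReal.ofReal α := by
  by_cases hT : ∃ y₀, cdfLt G y₀ ≤ α ∧ α < cdfAt G y₀
  · obtain ⟨y₀, ha₀, hb₀⟩ := hT
    set r := (α - cdfLt G y₀) / (cdfAt G y₀ - cdfLt G y₀) with hrdef
    have ha₀b₀ : cdfLt G y₀ < cdfAt G y₀ := lt_of_le_of_lt ha₀ hb₀
    have h0a : (0:ℝ) ≤ cdfLt G y₀ := ENNReal.toReal_nonneg
    have hint : ∀ y, unif01 {u : ℝ | cdfLt G y + u * (cdfAt G y - cdfLt G y) ≤ α}
        = Set.indicator (Set.Iio y₀) (fun _ => (1:ℝ≥0∞)) y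
          + Set.indicator {y₀} (fun _ => ENNReal.ofReal r) y := by
      intro y
      rcases lt_trichotomy y y₀ with h | h | h
      · rw [psi_one (cdfLt_le_cdfAt G y) (le_trans (cdfAt_le_cdfLt G h) ha₀),
          Set.indicator_of_mem (Set.mem_Iio.mpr h),
          Set.indicator_of_notMem (by simp [ne_of_lt h]), add_zero]
      · subst h
        rw [psi_mid ha₀ hb₀, Set.indicator_of_notMem (by simp),
          Set.indicator_of_mem (Set.mem_singleton _), zero_add]
      · rw [psi_zero (cdfLt_le_cdfAt G y) (lt_of_lt_of_le hb₀ (cdfAt_le_cdfLt G h)),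
          Set.indicator_of_notMem (by simp [not_lt.mpr (le_of_lt h)]),
          Set.indicator_of_notMem (by simp [ne_of_gt h]), add_zero]
    rw [lintegral_congr hint,
      lintegral_add_left (measurable_const.indicator measurableSet_Iio),
      lintegral_indicator measurableSet_Iio, lintegral_indicator (measurableSet_singleton y₀),
      setLIntegral_const, setLIntegral_const, one_mul]
    have hsing : G {y₀} = ENNReal.ofReal (cdfAt G y₀ - cdfLt G y₀) := by
      have hunion : G (Set.Iic y₀) = G (Set.Iio y₀) + G {y₀} := by
        rw [← Set.Iio_union_right, measure_union (by simp) (measurableSet_singleton y₀)]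
      have h2 : G (Set.Iio y₀) + G {y₀}
          = G (Set.Iio y₀) + ENNReal.ofReal (cdfAt G y₀ - cdfLt G y₀) := by
        rw [← hunion, measure_Iic_eq_ofReal_cdfAt, measure_Iio_eq_ofReal_cdfLt,
          ← ENNReal.ofReal_add h0a (by linarith : (0:ℝ) ≤ cdfAt G y₀ - cdfLt G y₀)]
        congr 1
        ring
      exact (ENNReal.add_right_inj (measure_ne_top _ _)).mp h2
    rw [hsing, measure_Iio_eq_ofReal_cdfLt, ← ENNReal.ofReal_mul
      (by rw [hrdef]; exact div_nonneg (by linarith) (by linarith)),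
      hrdef, div_mul_cancel₀ _ (ne_of_gt (by linarith : (0:ℝ) < cdfAt G y₀ - cdfLt G y₀)),
      ← ENNReal.ofReal_add h0a (by linarith : (0:ℝ) ≤ α - cdfLt G y₀)]
    congr 1
    ring
  · push_neg at hT
    set s := {y : ℝ | cdfAt G y ≤ α} with hsdef
    have hne : s.Nonempty := by
      by_contra h
      rw [Set.not_nonempty_iff_eq_empty] at h
      have hall : ∀ y : ℝ, α < cdfAt G y := by
        intro y
        by_contra hy
        have hmem : y ∈ s := not_lt.mp hy
        rw [h] at hmem
        exact hmem
      have hlow : ∀ n : ℕ, ENNReal.ofReal α ≤ G (Set.Iic (-(n:ℝ))) := fun n => by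
        rw [measure_Iic_eq_ofReal_cdfAt]
        exact ENNReal.ofReal_le_ofReal (le_of_lt (hall _))
      have hiempty : ⋂ n : ℕ, Set.Iic (-(n:ℝ)) = ∅ := by
        ext x
        simp only [Set.mem_iInter, Set.mem_Iic, Set.mem_empty_iff_false, iff_false, not_forall,
          not_le]
        obtain ⟨n, hn⟩ := exists_nat_gt (-x)
        exact ⟨n, by linarith⟩
      have htd : Tendsto (fun n : ℕ => G (Set.Iic (-(n:ℝ)))) atTop (𝓝 0) := by
        have := tendsto_measure_iInter_atTop (μ := G)
          (s := fun n : ℕ => Set.Iic (-(n:ℝ)))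
          (fun n => measurableSet_Iic.nullMeasurableSet)
          (fun n m hnm => Set.Iic_subset_Iic.mpr (by exact_mod_cast neg_le_neg (Nat.cast_le.mpr hnm)))
          ⟨0, measure_ne_top _ _⟩
        rwa [hiempty, measure_empty] at this
      have := ge_of_tendsto' htd hlow
      exact absurd this (not_le.mpr (ENNReal.ofReal_pos.mpr h0))
    have hbdd : BddAbove s := by
      have hex : ∃ y₁ : ℝ, α < cdfAt G y₁ := by
        by_contra h
        push_neg at h
        have htd := tendsto_measure_Iic_atTop (μ := G)
        have hle : ∀ y : ℝ, G (Set.Iic y) ≤ ENNReal.ofReal α := fun y => by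
          rw [measure_Iic_eq_ofReal_cdfAt]
          exact ENNReal.ofReal_le_ofReal (h y)
        have := le_of_tendsto' htd hle
        rw [measure_univ] at this
        exact absurd (lt_of_le_of_lt this (ENNReal.ofReal_lt_one.mpr h1)) (lt_irrefl _)
      obtain ⟨y₁, hy₁⟩ := hex
      refine ⟨y₁, fun y hy => ?_⟩
      by_contra hlt
      push_neg at hlt
      exact absurd (lt_of_lt_of_le hy₁ (le_trans (cdfAt_mono G hlt.le) hy)) (lt_irrefl _)
    set c := sSup s with hcdef
    have hcdfLt_le : cdfLt G c ≤ α := by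
      have hGle : G (Set.Iio c) ≤ ENNReal.ofReal α := by
        have hU : Set.Iio c = ⋃ q : {q : ℚ // (q:ℝ) < c}, Set.Iic ((q:ℚ):ℝ) := by
          ext x
          simp only [Set.mem_Iio, Set.mem_iUnion, Set.mem_Iic]
          constructor
          · intro hx
            obtain ⟨q, hq1, hq2⟩ := exists_rat_btwn hx
            exact ⟨⟨q, hq2⟩, le_of_lt hq1⟩
          · rintro ⟨⟨q, hq⟩, hxq⟩
            exact lt_of_le_of_lt hxq hq
        have hdir : Directed (· ⊆ ·) fun q : {q : ℚ // (q:ℝ) < c} => Set.Iic ((q:ℚ):ℝ) := by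
          rintro ⟨q, hq⟩ ⟨p, hp⟩
          refine ⟨⟨max q p, ?_⟩, ?_, ?_⟩
          · push_cast
            exact max_lt hq hp
          · exact Set.Iic_subset_Iic.mpr (by push_cast; exact le_max_left _ _)
          · exact Set.Iic_subset_Iic.mpr (by push_cast; exact le_max_right _ _)
        rw [hU, hdir.measure_iUnion]
        refine iSup_le ?_
        rintro ⟨q, hq⟩
        obtain ⟨z, hzs, hqz⟩ := exists_lt_of_lt_csSup hne hq
        calc G (Set.Iic ((q:ℚ):ℝ)) ≤ G (Set.Iic z) := measure_mono (Set.Iic_subset_Iic.mpr hqz.le)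
          _ = ENNReal.ofReal (cdfAt G z) := measure_Iic_eq_ofReal_cdfAt G z
          _ ≤ ENNReal.ofReal α := ENNReal.ofReal_le_ofReal hzs
      calc cdfLt G c = (G (Set.Iio c)).toReal := rfl
        _ ≤ (ENNReal.ofReal α).toReal := ENNReal.toReal_mono ENNReal.ofReal_ne_top hGle
        _ = α := ENNReal.toReal_ofReal h0.le
    have hcs : cdfAt G c ≤ α := hT c hcdfLt_le
    have hcge : ENNReal.ofReal α ≤ G (Set.Iic c) := by
      have hseq : Set.Iic c = ⋂ n : ℕ, Set.Iio (c + 1 / ((n:ℝ) + 1)) := by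
        ext x
        simp only [Set.mem_Iic, Set.mem_iInter, Set.mem_Iio]
        constructor
        · intro hx n
          have : (0:ℝ) < 1 / ((n:ℝ) + 1) := by positivity
          linarith
        · intro hx
          by_contra hcx
          push_neg at hcx
          obtain ⟨n, hn⟩ := exists_nat_one_div_lt (by linarith : (0:ℝ) < x - c)
          have := hx n
          linarith
      have htd : Tendsto (fun n : ℕ => G (Set.Iio (c + 1 / ((n:ℝ) + 1)))) atTop
          (𝓝 (G (Set.Iic c))) := by
        rw [hseq]
        refine tendsto_measure_iInter_atTop (fun n => measurableSet_Iio.nullMeasurableSet)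
          (fun n m hnm => ?_) ⟨0, measure_ne_top _ _⟩
        refine Set.Iio_subset_Iio ?_
        have h1 : (1:ℝ) / ((m:ℝ) + 1) ≤ 1 / ((n:ℝ) + 1) := by
          apply one_div_le_one_div_of_le (by positivity)
          exact_mod_cast Nat.add_le_add_right hnm 1
        linarith
      refine ge_of_tendsto' htd (fun n => ?_)
      have hcy : c < c + 1 / ((n:ℝ) + 1) := by
        have : (0:ℝ) < 1 / ((n:ℝ) + 1) := by positivity
        linarith
      have hns : c + 1 / ((n:ℝ) + 1) ∉ s := fun hmem =>
        absurd (le_csSup hbdd hmem) (not_le.mpr hcy)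
      have hαb : α < cdfAt G (c + 1 / ((n:ℝ) + 1)) := not_le.mp hns
      have hαa : α < cdfLt G (c + 1 / ((n:ℝ) + 1)) := by
        by_contra hle
        exact absurd (hT _ (not_lt.mp hle)) (not_le.mpr hαb)
      rw [measure_Iio_eq_ofReal_cdfLt]
      exact ENNReal.ofReal_le_ofReal hαa.le
    have hceq : G (Set.Iic c) = ENNReal.ofReal α :=
      le_antisymm (by rw [measure_Iic_eq_ofReal_cdfAt]; exact ENNReal.ofReal_le_ofReal hcs) hcge
    have hint : ∀ y, unif01 {u : ℝ | cdfLt G y + u * (cdfAt G y - cdfLt G y) ≤ α}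
        = Set.indicator (Set.Iic c) (fun _ => (1:ℝ≥0∞)) y := by
      intro y
      by_cases hy : cdfAt G y ≤ α
      · rw [psi_one (cdfLt_le_cdfAt G y) hy, Set.indicator_of_mem (Set.mem_Iic.mpr (le_csSup hbdd hy))]
      · have hy' : α < cdfAt G y := not_le.mp hy
        have hy'' : α < cdfLt G y := by
          by_contra hle
          exact absurd (hT _ (not_lt.mp hle)) hy
        rw [psi_zero (cdfLt_le_cdfAt G y) hy'', Set.indicator_of_notMem]
        intro hyc
        exact hy (le_trans (cdfAt_mono G hyc) hcs)
    rw [lintegral_congr hint, lintegral_indicator measurableSet_Iic, setLIntegral_const,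
      one_mul, hceq]

/-- A measurable version of the CDF, jointly in `(G, y)`. -/
def mcdfE (p : Measure ℝ × ℝ) : ℝ≥0∞ :=
  ⨅ q : ℚ, if p.2 < (q:ℝ) then p.1 (Set.Iic ((q:ℚ):ℝ)) else ⊤

/-- A measurable version of the left limit of the CDF, jointly in `(G, y)`. -/
def mcdfltE (p : Measure ℝ × ℝ) : ℝ≥0∞ :=
  ⨆ q : ℚ, if ((q:ℚ):ℝ) < p.2 then p.1 (Set.Iic ((q:ℚ):ℝ)) else 0

lemma measurable_mcdfE : Measurable mcdfE := by
  apply Measurable.iInf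
  intro q
  apply Measurable.ite
  · exact measurableSet_lt measurable_snd measurable_const
  · exact (Measure.measurable_coe measurableSet_Iic).comp measurable_fst
  · exact measurable_const

lemma measurable_mcdfltE : Measurable mcdfltE := by
  apply Measurable.iSup
  intro q
  apply Measurable.ite
  · exact measurableSet_lt measurable_const measurable_snd
  · exact (Measure.measurable_coe measurableSet_Iic).comp measurable_fst
  · exact measurable_const

lemma mcdfE_eq (G : Measure ℝ) [IsProbabilityMeasure G] (y : ℝ) :
    mcdfE (G, y) = G (Set.Iic y) := by
  apply le_antisymm
  · have htd : Tendsto (fun n : ℕ => G (Set.Iic (y + 1 / ((n:ℝ) + 1)))) atTop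
        (𝓝 (G (Set.Iic y))) := by
      have hseq : Set.Iic y = ⋂ n : ℕ, Set.Iic (y + 1 / ((n:ℝ) + 1)) := by
        ext x
        simp only [Set.mem_Iic, Set.mem_iInter]
        constructor
        · intro hx n
          have : (0:ℝ) < 1 / ((n:ℝ) + 1) := by positivity
          linarith
        · intro hx
          by_contra hcx
          push_neg at hcx
          obtain ⟨n, hn⟩ := exists_nat_one_div_lt (by linarith : (0:ℝ) < x - y)
          have := hx n
          linarith
      rw [hseq]
      refine tendsto_measure_iInter_atTop (fun n => measurableSet_Iic.nullMeasurableSet)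
        (fun n m hnm => Set.Iic_subset_Iic.mpr ?_) ⟨0, measure_ne_top _ _⟩
      have h1 : (1:ℝ) / ((m:ℝ) + 1) ≤ 1 / ((n:ℝ) + 1) := by
        apply one_div_le_one_div_of_le (by positivity)
        exact_mod_cast Nat.add_le_add_right hnm 1
      linarith
    refine ge_of_tendsto' htd (fun n => ?_)
    have hpos : (0:ℝ) < 1 / ((n:ℝ) + 1) := by positivity
    obtain ⟨q, hq1, hq2⟩ := exists_rat_btwn (by linarith : y < y + 1 / ((n:ℝ) + 1))
    calc mcdfE (G, y) ≤ if y < (q:ℝ) then G (Set.Iic ((q:ℚ):ℝ)) else ⊤ := iInf_le _ q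
      _ = G (Set.Iic ((q:ℚ):ℝ)) := if_pos hq1
      _ ≤ G (Set.Iic (y + 1 / ((n:ℝ) + 1))) := measure_mono (Set.Iic_subset_Iic.mpr hq2.le)
  · refine le_iInf (fun q => ?_)
    by_cases hq : y < (q:ℝ)
    · rw [if_pos hq]
      exact measure_mono (Set.Iic_subset_Iic.mpr hq.le)
    · rw [if_neg hq]
      exact le_top
lemma mcdfltE_eq (G : Measure ℝ) (y : ℝ) :
    mcdfltE (G, y) = G (Set.Iio y) := by
  apply le_antisymm
  · refine iSup_le (fun q => ?_)
    by_cases hq : ((q:ℚ):ℝ) < y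
    · rw [if_pos hq]
      exact measure_mono (fun x hx => lt_of_le_of_lt hx hq)
    · rw [if_neg hq]
      exact zero_le
  · have hU : Set.Iio y = ⋃ q : {q : ℚ // ((q:ℚ):ℝ) < y}, Set.Iic (((q:ℚ):ℚ):ℝ) := by
      ext x
      simp only [Set.mem_Iio, Set.mem_iUnion, Set.mem_Iic]
      constructor
      · intro hx
        obtain ⟨q, hq1, hq2⟩ := exists_rat_btwn hx
        exact ⟨⟨q, hq2⟩, hq1.le⟩
      · rintro ⟨⟨q, hq⟩, hxq⟩
        exact lt_of_le_of_lt hxq hq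
    have hdir : Directed (· ⊆ ·) fun q : {q : ℚ // ((q:ℚ):ℝ) < y} => Set.Iic (((q:ℚ):ℚ):ℝ) := by
      rintro ⟨q, hq⟩ ⟨p, hp⟩
      refine ⟨⟨max q p, ?_⟩, ?_, ?_⟩
      · push_cast
        exact max_lt hq hp
      · exact Set.Iic_subset_Iic.mpr (by push_cast; exact le_max_left _ _)
      · exact Set.Iic_subset_Iic.mpr (by push_cast; exact le_max_right _ _)
    rw [hU, hdir.measure_iUnion]
    refine iSup_le ?_
    rintro ⟨q, hq⟩
    calc G (Set.Iic ((q:ℚ):ℝ))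
        = if ((q:ℚ):ℝ) < y then G (Set.Iic ((q:ℚ):ℝ)) else 0 := (if_pos hq).symm
      _ ≤ mcdfltE (G, y) := le_iSup (fun q : ℚ => if ((q:ℚ):ℝ) < y then
          G (Set.Iic ((q:ℚ):ℝ)) else 0) q

/-- Two probability measures on `ℝ` agreeing on `Iic q` for all rationals `q` are equal. -/
lemma measure_eq_of_Iic_rat (G H : Measure ℝ) [IsProbabilityMeasure G] [IsProbabilityMeasure H]
    (h : ∀ q : ℚ, G (Set.Iic ((q:ℚ):ℝ)) = H (Set.Iic ((q:ℚ):ℝ))) : G = H := by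
  have key : ∀ y : ℝ, G (Set.Iic y) = H (Set.Iic y) := by
    intro y
    calc G (Set.Iic y) = mcdfE (G, y) := (mcdfE_eq G y).symm
      _ = mcdfE (H, y) := by
          unfold mcdfE
          exact iInf_congr (fun q => by by_cases hq : y < (q:ℝ) <;> simp [hq, h q])
      _ = H (Set.Iic y) := mcdfE_eq H y
  exact MeasureTheory.Measure.ext_of_Iic G H key

end Aux

open Filter Topology
open scoped ENNReal

/-- **Theorem (Statement 0).** In a prediction space, auto-calibration of the predictive
distribution `F` implies both marginal and probabilistic calibration. -/
theorem autoCalibrated_implies_marg_and_prob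
    {Ω : Type*} [MeasurableSpace Ω] (μ : Measure Ω) (F : Ω → Measure ℝ) (Y U : Ω → ℝ)
    (hps : IsPredictionSpace μ F Y U) (hac : AutoCalibrated μ F Y) :
    MargCalibrated μ F Y ∧ ProbCalibrated μ F Y U := by
  obtain ⟨hprob, hprobF, hF, hY, hU, hunifU, hindepU⟩ := hps
  haveI := hprob
  have hmle : MeasurableSpace.comap F inferInstance ≤ ‹MeasurableSpace Ω› := hF.comap_le
  haveI : SigmaFinite (μ.trim hmle) := inferInstance
  constructor
  · -- Marginal calibration
    intro y
    have hsmeas : MeasurableSet {ω | Y ω ≤ y} := measurableSet_le hY measurable_const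
    rw [integral_congr_ae (hac y), integral_condExp hmle, integral_indicator_const (1:ℝ) hsmeas, smul_eq_mul, mul_one, measureReal_def]
  · -- Probabilistic calibration
    set A : Ω → ℝ := fun ω => (mcdfltE (F ω, Y ω)).toReal with hAdef
    set B : Ω → ℝ := fun ω => (mcdfE (F ω, Y ω)).toReal with hBdef
    have hFY : Measurable (fun ω => (F ω, Y ω)) := hF.prodMk hY
    have hA : Measurable A := (measurable_mcdfltE.comp hFY).ennreal_toReal
    have hB : Measurable B := (measurable_mcdfE.comp hFY).ennreal_toReal
    have hAeq : ∀ ω, A ω = cdfLt (F ω) (Y ω) := fun ω => by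
      rw [hAdef]; simp only []; rw [mcdfltE_eq]; rfl
    have hBeq : ∀ ω, B ω = cdfAt (F ω) (Y ω) := fun ω => by
      haveI := hprobF ω
      rw [hBdef]; simp only []; rw [mcdfE_eq]; rfl
    have hPIT_eq : PIT F Y U = fun ω => A ω + U ω * (B ω - A ω) := by
      funext ω
      rw [PIT, hAeq, hBeq]
    have hPITmeas : Measurable (PIT F Y U) := by
      rw [hPIT_eq]
      exact hA.add (hU.mul (hB.sub hA))
    haveI : IsProbabilityMeasure (μ.map (PIT F Y U)) :=
      Measure.isProbabilityMeasure_map hPITmeas.aemeasurable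
    -- Step A: the conditional distribution of Y given F is F itself, a.s.
    have hcondA : ∀ᵐ ω ∂μ, condDistrib Y F μ (F ω) = F ω := by
      have hq : ∀ q : ℚ, ∀ᵐ ω ∂μ, condDistrib Y F μ (F ω) (Set.Iic ((q:ℚ):ℝ))
          = F ω (Set.Iic ((q:ℚ):ℝ)) := by
        intro q
        have h1 := condDistrib_ae_eq_condExp (μ := μ) hF hY
          (measurableSet_Iic : MeasurableSet (Set.Iic ((q:ℚ):ℝ)))
        have h2 := hac ((q:ℚ):ℝ)
        have hset : Y ⁻¹' (Set.Iic ((q:ℚ):ℝ)) = {ω | Y ω ≤ ((q:ℚ):ℝ)} := rfl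
        rw [hset] at h1
        filter_upwards [h1, h2] with ω hω1 hω2
        have heq : (condDistrib Y F μ (F ω) (Set.Iic ((q:ℚ):ℝ))).toReal
            = (F ω (Set.Iic ((q:ℚ):ℝ))).toReal := by
          rw [← measureReal_def, hω1, ← hω2]
          rfl
        haveI := hprobF ω
        exact (ENNReal.toReal_eq_toReal_iff' (measure_ne_top _ _) (measure_ne_top _ _)).mp heq
      have hall := MeasureTheory.ae_all_iff.mpr hq
      filter_upwards [hall] with ω hω
      haveI := hprobF ω
      exact measure_eq_of_Iic_rat _ _ hω
    -- core computation for α ∈ (0,1)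
    have hcore : ∀ α : ℝ, 0 < α → α < 1 →
        μ.map (PIT F Y U) (Set.Iic α) = ENNReal.ofReal α := by
      intro α hα0 hα1
      set S : Set ((ℝ × ℝ) × ℝ) := {p | p.1.1 + p.2 * (p.1.2 - p.1.1) ≤ α} with hSdef
      have hS : MeasurableSet S := by
        have hcont : Continuous fun p : (ℝ × ℝ) × ℝ => p.1.1 + p.2 * (p.1.2 - p.1.1) := by
          fun_prop
        exact measurableSet_le hcont.measurable measurable_const
      have hABmeas : Measurable (fun ω => (A ω, B ω)) := hA.prodMk hB
      -- independence of (A, B) and U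
      have hIndep : IndepFun (fun ω => (A ω, B ω)) U μ := by
        have hFm : Measurable[MeasurableSpace.comap F inferInstance
            ⊔ MeasurableSpace.comap Y inferInstance] F := Measurable.of_comap_le le_sup_left
        have hYm : Measurable[MeasurableSpace.comap F inferInstance
            ⊔ MeasurableSpace.comap Y inferInstance] Y := Measurable.of_comap_le le_sup_right
        have hABm' : Measurable[MeasurableSpace.comap F inferInstance
            ⊔ MeasurableSpace.comap Y inferInstance] (fun ω => (A ω, B ω)) :=
          ((measurable_mcdfltE.ennreal_toReal).prodMk
            (measurable_mcdfE.ennreal_toReal)).comp (hFm.prodMk hYm)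
        have hsub := hABm'.comap_le
        exact (indep_of_indep_of_le_right hindepU hsub).symm
      have hmap : μ.map (fun ω => ((A ω, B ω), U ω))
          = (μ.map (fun ω => (A ω, B ω))).prod unif01 := by
        rw [← hunifU]
        exact (indepFun_iff_map_prod_eq_prod_map_map hABmeas.aemeasurable hU.aemeasurable).mp
          hIndep
      have h1 : μ.map (PIT F Y U) (Set.Iic α)
          = μ.map (fun ω => ((A ω, B ω), U ω)) S := by
        rw [Measure.map_apply hPITmeas measurableSet_Iic,
          Measure.map_apply (hABmeas.prodMk hU) hS]
        congr 1
        ext ω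
        simp only [Set.mem_preimage, Set.mem_Iic, hSdef, Set.mem_setOf_eq, hPIT_eq]
      have h2 : μ.map (fun ω => ((A ω, B ω), U ω)) S
          = ∫⁻ p, unif01 (Prod.mk p ⁻¹' S) ∂(μ.map fun ω => (A ω, B ω)) := by
        rw [hmap, Measure.prod_apply hS]
      have hψmeas : Measurable (fun p : ℝ × ℝ => unif01 (Prod.mk p ⁻¹' S)) :=
        measurable_measure_prodMk_left hS
      have h3 : ∫⁻ p, unif01 (Prod.mk p ⁻¹' S) ∂(μ.map fun ω => (A ω, B ω))
          = ∫⁻ ω, unif01 (Prod.mk (A ω, B ω) ⁻¹' S) ∂μ :=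
        lintegral_map hψmeas hABmeas
      set g : Measure ℝ × ℝ → ℝ≥0∞ :=
        fun q => unif01 (Prod.mk ((mcdfltE q).toReal, (mcdfE q).toReal) ⁻¹' S) with hgdef
      have hgmeas : Measurable g :=
        hψmeas.comp ((measurable_mcdfltE.ennreal_toReal).prodMk
          (measurable_mcdfE.ennreal_toReal))
      have h4 : ∫⁻ ω, unif01 (Prod.mk (A ω, B ω) ⁻¹' S) ∂μ
          = ∫⁻ q, g q ∂(μ.map fun ω => (F ω, Y ω)) := by
        rw [lintegral_map hgmeas hFY]
      haveI : IsProbabilityMeasure (μ.map fun ω => (F ω, Y ω)) :=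
        Measure.isProbabilityMeasure_map hFY.aemeasurable
      have hdis : (μ.map F) ⊗ₘ condDistrib Y F μ = μ.map fun ω => (F ω, Y ω) := by
        rw [condDistrib_def, ← Measure.fst_map_prodMk (X := F) hY,
          Measure.disintegrate]
      have h5 : ∫⁻ q, g q ∂(μ.map fun ω => (F ω, Y ω))
          = ∫⁻ G', ∫⁻ y, g (G', y) ∂(condDistrib Y F μ G') ∂(μ.map F) := by
        rw [← hdis, Measure.lintegral_compProd hgmeas]
      have hinner_meas : Measurable fun G' => ∫⁻ y, g (G', y) ∂(condDistrib Y F μ G') :=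
        Measurable.lintegral_kernel_prod_right' hgmeas
      have h6 : ∫⁻ G', ∫⁻ y, g (G', y) ∂(condDistrib Y F μ G') ∂(μ.map F)
          = ∫⁻ ω, ∫⁻ y, g (F ω, y) ∂(condDistrib Y F μ (F ω)) ∂μ :=
        lintegral_map hinner_meas hF
      have h7 : ∫⁻ ω, ∫⁻ y, g (F ω, y) ∂(condDistrib Y F μ (F ω)) ∂μ
          = ∫⁻ ω, ∫⁻ y, g (F ω, y) ∂(F ω) ∂μ :=
        lintegral_congr_ae (hcondA.mono fun ω h => by simp only [h])
      have h8 : ∀ ω, ∫⁻ y, g (F ω, y) ∂(F ω) = ENNReal.ofReal α := by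
        intro ω
        haveI := hprobF ω
        have hgy : ∀ y, g (F ω, y)
            = unif01 {u : ℝ | cdfLt (F ω) y + u * (cdfAt (F ω) y - cdfLt (F ω) y) ≤ α} := by
          intro y
          have e1 : (mcdfltE (F ω, y)).toReal = cdfLt (F ω) y := by rw [mcdfltE_eq]; rfl
          have e2 : (mcdfE (F ω, y)).toReal = cdfAt (F ω) y := by rw [mcdfE_eq]; rfl
          rw [hgdef]
          simp only []
          congr 1
          ext u
          simp only [Set.mem_preimage, hSdef, Set.mem_setOf_eq, e1, e2]
        rw [lintegral_congr hgy, det_PIT (F ω) hα0 hα1]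
      rw [h1, h2, h3, h4, h5, h6, h7, lintegral_congr h8, lintegral_const, measure_univ,
        mul_one]
    -- conclude by extensionality of measures via Iic sets
    refine Measure.ext_of_Iic _ _ (fun a => ?_)
    have hrp : ∀ n : ℕ, (0:ℝ) < 1 / ((n:ℝ) + 2) := fun n => by positivity
    have hrlt : ∀ n : ℕ, 1 / ((n:ℝ) + 2) < 1 := fun n => by
      rw [div_lt_one (by positivity)]
      have : (0:ℝ) ≤ (n:ℝ) := Nat.cast_nonneg n
      linarith
    have hrtend : Tendsto (fun n : ℕ => 1 / ((n:ℝ) + 2)) atTop (𝓝 0) := by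
      simp only [one_div]
      exact tendsto_inv_atTop_zero.comp
        (tendsto_atTop_add_const_right atTop 2 tendsto_natCast_atTop_atTop)
    rcases le_or_gt a 0 with ha | ha
    · -- both sides are zero
      have hL : μ.map (PIT F Y U) (Set.Iic a) = 0 := by
        have hb : ∀ n : ℕ, μ.map (PIT F Y U) (Set.Iic a) ≤ ENNReal.ofReal (1 / ((n:ℝ) + 2)) :=
          fun n => by
            rw [← hcore _ (hrp n) (hrlt n)]
            exact measure_mono (Set.Iic_subset_Iic.mpr (le_trans ha (hrp n).le))
        have htd : Tendsto (fun n : ℕ => ENNReal.ofReal (1 / ((n:ℝ) + 2))) atTop (𝓝 0) := by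
          rw [show (0:ℝ≥0∞) = ENNReal.ofReal 0 by simp]
          exact ENNReal.tendsto_ofReal hrtend
        exact le_antisymm (ge_of_tendsto' htd hb) zero_le
      have hR : unif01 (Set.Iic a) = 0 := by
        rw [unif01_apply]
        refine measure_mono_null (t := {(0:ℝ)}) (fun x hx => ?_) Real.volume_singleton
        rcases hx with ⟨hx1, hx2, _⟩
        have : x = 0 := le_antisymm (le_trans hx1 ha) hx2
        simp [this]
      rw [hL, hR]
    · rcases lt_or_ge a 1 with ha1 | ha1
      · rw [hcore a ha ha1, unif01_apply]
        have hset : Set.Iic a ∩ Set.Icc (0:ℝ) 1 = Set.Icc (0:ℝ) a := by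
          ext x
          simp only [Set.mem_inter_iff, Set.mem_Iic, Set.mem_Icc]
          constructor
          · rintro ⟨h1', h2', _⟩
            exact ⟨h2', h1'⟩
          · rintro ⟨h1', h2'⟩
            exact ⟨h2', h1', le_trans h2' ha1.le⟩
        rw [hset, Real.volume_Icc, sub_zero]
      · -- a ≥ 1 : both sides are 1
        have hL : μ.map (PIT F Y U) (Set.Iic a) = 1 := by
          have hb : ∀ n : ℕ, ENNReal.ofReal (1 - 1 / ((n:ℝ) + 2))
              ≤ μ.map (PIT F Y U) (Set.Iic a) := fun n => by
            rw [← hcore _ (by linarith [hrlt n] : (0:ℝ) < 1 - 1 / ((n:ℝ) + 2))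
              (by linarith [hrp n] : 1 - 1 / ((n:ℝ) + 2) < 1)]
            exact measure_mono (Set.Iic_subset_Iic.mpr (by linarith [hrp n]))
          have htd : Tendsto (fun n : ℕ => ENNReal.ofReal (1 - 1 / ((n:ℝ) + 2))) atTop
              (𝓝 1) := by
            rw [show (1:ℝ≥0∞) = ENNReal.ofReal 1 by simp]
            exact ENNReal.tendsto_ofReal (by simpa using tendsto_const_nhds.sub hrtend)
          exact le_antisymm prob_le_one (le_of_tendsto' htd hb)
        have hR : unif01 (Set.Iic a) = 1 := by
          rw [unif01_apply]
          have hset : Set.Iic a ∩ Set.Icc (0:ℝ) 1 = Set.Icc (0:ℝ) 1 :=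
            Set.inter_eq_right.mpr (fun x hx => le_trans hx.2 ha1)
          rw [hset, Real.volume_Icc]
          norm_num
        rw [hL, hR]

end
end

section
/- In a prediction space, CEP calibration of the predictive distribution F implies probabilistic calibration of F, and threshold calibration of F implies marginal calibration of F. -/
open MeasureTheory ProbabilityTheory

noncomputable section

variable {Ω : Type*} [MeasurableSpace Ω]

lemma aux_meas_cdfAt {Ω : Type*} [MeasurableSpace Ω] {F : Ω → Measure ℝ} {Y : Ω → ℝ}
    (hF : Measurable F) (hY : Measurable Y) (hFp : ∀ ω, IsProbabilityMeasure (F ω)) :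
    Measurable fun ω => cdfAt (F ω) (Y ω) := by
  have hκ : IsMarkovKernel (⟨F, hF⟩ : Kernel Ω ℝ) := ⟨fun ω => hFp ω⟩
  have hs : MeasurableSet {p : Ω × ℝ | p.2 ≤ Y p.1} :=
    measurableSet_le measurable_snd (hY.comp measurable_fst)
  have h := Kernel.measurable_kernel_prodMk_left (κ := (⟨F, hF⟩ : Kernel Ω ℝ)) hs
  have h2 : Measurable fun ω => F ω (Set.Iic (Y ω)) := h
  exact h2.ennreal_toReal

lemma aux_meas_cdfLt {Ω : Type*} [MeasurableSpace Ω] {F : Ω → Measure ℝ} {Y : Ω → ℝ}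
    (hF : Measurable F) (hY : Measurable Y) (hFp : ∀ ω, IsProbabilityMeasure (F ω)) :
    Measurable fun ω => cdfLt (F ω) (Y ω) := by
  have hκ : IsMarkovKernel (⟨F, hF⟩ : Kernel Ω ℝ) := ⟨fun ω => hFp ω⟩
  have hs : MeasurableSet {p : Ω × ℝ | p.2 < Y p.1} :=
    measurableSet_lt measurable_snd (hY.comp measurable_fst)
  have h := Kernel.measurable_kernel_prodMk_left (κ := (⟨F, hF⟩ : Kernel Ω ℝ)) hs
  have h2 : Measurable fun ω => F ω (Set.Iio (Y ω)) := h
  exact h2.ennreal_toReal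

/-- `unif01` of `Iic a` is `ofReal (min a 1)`. -/
lemma unif01_Iic (a : ℝ) : unif01 (Set.Iic a) = ENNReal.ofReal (min a 1) := by
  rw [unif01, Measure.restrict_apply measurableSet_Iic]
  have : Set.Iic a ∩ Set.Icc (0:ℝ) 1 = Set.Icc 0 (min a 1) := by
    ext x
    simp only [Set.mem_inter_iff, Set.mem_Iic, Set.mem_Icc, le_min_iff]
    constructor
    · rintro ⟨h1, h2, h3⟩; exact ⟨h2, h1, h3⟩
    · rintro ⟨h1, h2, h3⟩; exact ⟨h2, h1, h3⟩
  rw [this, Real.volume_Icc, sub_zero]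


lemma aux_condexp_indicator_const {Ω : Type*} {m0 : MeasurableSpace Ω} (μ : Measure Ω)
    [IsProbabilityMeasure μ] (m : MeasurableSpace Ω) {s : Set Ω} (hs : MeasurableSet[m0] s)
    {α : ℝ} (hα : 0 < α)
    (h : μ[Set.indicator s (fun _ => (1:ℝ)) | m] =ᵐ[μ] fun _ => α) :
    μ s = ENNReal.ofReal α := by
  by_cases hm : m ≤ m0
  · haveI : SigmaFinite (μ.trim hm) := by
      haveI : IsFiniteMeasure (μ.trim hm) := isFiniteMeasure_trim hm
      infer_instance
    have h1 : ∫ ω, (μ[Set.indicator s (fun _ => (1:ℝ)) | m]) ω ∂μ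
        = ∫ ω, Set.indicator s (fun _ => (1:ℝ)) ω ∂μ := integral_condExp hm
    have h2 : ∫ ω, (μ[Set.indicator s (fun _ => (1:ℝ)) | m]) ω ∂μ = α := by
      rw [integral_congr_ae h]; simp
    have h3 : ∫ ω, Set.indicator s (fun _ => (1:ℝ)) ω ∂μ = (μ s).toReal := by
      have := @integral_indicator_const Ω ℝ m0 _ _ μ _ (1:ℝ) s hs; simpa [measureReal_def] using this
    have h4 : (μ s).toReal = α := by rw [← h3, ← h1, h2]
    rw [← h4, ENNReal.ofReal_toReal (measure_ne_top μ _)]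
  · exfalso
    rw [condExp_of_not_le hm] at h
    obtain ⟨ω, hω⟩ := h.exists
    simp only [Pi.zero_apply] at hω
    exact absurd hω.symm (ne_of_gt hα)

lemma aux_condexp_integral_eq {Ω : Type*} {m0 : MeasurableSpace Ω} (μ : Measure Ω)
    [IsProbabilityMeasure μ] {m : MeasurableSpace Ω} (hm : m ≤ m0) {s : Set Ω}
    (hs : MeasurableSet[m0] s) {g : Ω → ℝ}
    (h : μ[Set.indicator s (fun _ => (1:ℝ)) | m] =ᵐ[μ] g) :
    ∫ ω, g ω ∂μ = (μ s).toReal := by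
  haveI : SigmaFinite (μ.trim hm) := by
    haveI : IsFiniteMeasure (μ.trim hm) := isFiniteMeasure_trim hm
    infer_instance
  calc ∫ ω, g ω ∂μ = ∫ ω, (μ[Set.indicator s (fun _ => (1:ℝ)) | m]) ω ∂μ :=
        integral_congr_ae h.symm
    _ = ∫ ω, Set.indicator s (fun _ => (1:ℝ)) ω ∂μ := integral_condExp hm
    _ = (μ s).toReal := by
        have := @integral_indicator_const Ω ℝ m0 _ _ μ _ (1:ℝ) s hs; simpa [measureReal_def] using this

/-- **Theorem (Statement 1).** In a prediction space, CEP calibration implies probabilistic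
calibration, and threshold calibration implies marginal calibration. -/
theorem cep_implies_prob_and_thresh_implies_marg
    {Ω : Type*} [MeasurableSpace Ω] (μ : Measure Ω) (F : Ω → Measure ℝ) (Y U : Ω → ℝ)
    (hps : IsPredictionSpace μ F Y U) :
    (CEPCalibrated μ F Y U → ProbCalibrated μ F Y U) ∧
    (ThreshCalibrated μ F Y → MargCalibrated μ F Y) := by
  obtain ⟨hprob, hFp, hF, hY, hU, hUunif, _⟩ := hps
  haveI := hprob
  -- measurability of the PIT
  have hcA : Measurable fun ω => cdfAt (F ω) (Y ω) := aux_meas_cdfAt hF hY hFp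
  have hcL : Measurable fun ω => cdfLt (F ω) (Y ω) := aux_meas_cdfLt hF hY hFp
  have hZ : Measurable (PIT F Y U) := by
    unfold PIT
    exact hcL.add (hU.mul (hcA.sub hcL))
  constructor
  · -- CEP ⇒ probabilistic calibration
    intro hCEP
    -- key: μ {Z ≤ α} = ofReal α for α ∈ (0,1)
    have key : ∀ α ∈ Set.Ioo (0:ℝ) 1,
        μ {ω | PIT F Y U ω ≤ α} = ENNReal.ofReal α := by
      intro α hα
      have hs : MeasurableSet {ω | PIT F Y U ω ≤ α} :=
        measurableSet_le hZ measurable_const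
      exact aux_condexp_indicator_const μ _ hs hα.1 (hCEP α hα)
    -- a.s. bounds on the PIT
    have hU01 : ∀ᵐ ω ∂μ, U ω ∈ Set.Icc (0:ℝ) 1 := by
      have : μ (U ⁻¹' (Set.Icc (0:ℝ) 1)ᶜ) = 0 := by
        rw [← Measure.map_apply hU (measurableSet_Icc.compl), hUunif, unif01,
          Measure.restrict_apply measurableSet_Icc.compl]
        simp
      filter_upwards [measure_eq_zero_iff_ae_notMem.mp this] with ω hω
      simpa using hω
    have hbounds : ∀ᵐ ω ∂μ, 0 ≤ PIT F Y U ω ∧ PIT F Y U ω ≤ 1 := by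
      filter_upwards [hU01] with ω hω
      obtain ⟨hU0, hU1⟩ := hω
      haveI := hFp ω
      have hd : cdfLt (F ω) (Y ω) ≤ cdfAt (F ω) (Y ω) := by
        apply ENNReal.toReal_mono (measure_ne_top _ _)
        exact measure_mono Set.Iio_subset_Iic_self
      have hL0 : 0 ≤ cdfLt (F ω) (Y ω) := ENNReal.toReal_nonneg
      have hA1 : cdfAt (F ω) (Y ω) ≤ 1 := by
        rw [cdfAt, ← ENNReal.toReal_one]
        exact ENNReal.toReal_mono ENNReal.one_ne_top prob_le_one
      unfold PIT
      constructor
      · have := mul_nonneg hU0 (sub_nonneg.mpr hd)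
        linarith
      · nlinarith [mul_le_one₀ hU1 (sub_nonneg.mpr hd) (by linarith : cdfAt (F ω) (Y ω) - cdfLt (F ω) (Y ω) ≤ 1)]
    -- conclude by extensionality on Iic
    unfold ProbCalibrated
    haveI : IsFiniteMeasure unif01 := by
      constructor
      rw [unif01, Measure.restrict_apply MeasurableSet.univ]
      simp [Real.volume_Icc]
    haveI : IsProbabilityMeasure (μ.map (PIT F Y U)) :=
      Measure.isProbabilityMeasure_map hZ.aemeasurable
    refine Measure.ext_of_Iic _ _ (fun a => ?_)
    rw [Measure.map_apply hZ measurableSet_Iic, unif01_Iic]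
    show μ {ω | PIT F Y U ω ≤ a} = ENNReal.ofReal (min a 1)
    rcases le_or_gt a 0 with ha | ha
    · have hmin : min a 1 = a := min_eq_left (by linarith)
      rw [hmin]
      have h0 : μ {ω | PIT F Y U ω ≤ a} = 0 := by
        refine le_antisymm ?_ zero_le
        have hle : ∀ ε ∈ Set.Ioo (0:ℝ) 1, μ {ω | PIT F Y U ω ≤ a} ≤ ENNReal.ofReal ε := by
          intro ε hε
          rw [← key ε hε]
          exact measure_mono (fun ω h => le_trans h (by linarith [hε.1] : a ≤ ε))
        by_contra hc
        push_neg at hc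
        have hpos : 0 < μ {ω | PIT F Y U ω ≤ a} := pos_iff_ne_zero.mpr (by
          intro h; rw [h] at hc; exact absurd zero_le (not_le.mpr hc))
        set x := (μ {ω | PIT F Y U ω ≤ a}).toReal with hx
        have hxpos : 0 < x := ENNReal.toReal_pos (pos_iff_ne_zero.mp hpos) (measure_ne_top μ _)
        have hε : min (x/2) (1/2) ∈ Set.Ioo (0:ℝ) 1 := by
          constructor
          · exact lt_min (by linarith) (by norm_num)
          · exact lt_of_le_of_lt (min_le_right _ _) (by norm_num)
        have := hle _ hε
        have h2 : x ≤ min (x/2) (1/2) := by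
          rw [hx]
          have := ENNReal.toReal_mono ENNReal.ofReal_ne_top this
          rwa [ENNReal.toReal_ofReal (le_of_lt hε.1)] at this
        have := min_le_left (x/2) (1/2)
        linarith
      rw [h0, ENNReal.ofReal_of_nonpos ha]
    · rcases lt_or_ge a 1 with ha1 | ha1
      · rw [min_eq_left (le_of_lt ha1)]
        exact key a ⟨ha, ha1⟩
      · rw [min_eq_right ha1]
        have : μ {ω | PIT F Y U ω ≤ a} = 1 := by
          rw [← prob_compl_eq_zero_iff (measurableSet_le hZ measurable_const)]
          refine measure_mono_null ?_ (by
            filter_upwards [hbounds] with ω hω using hω.2 : ∀ᵐ ω ∂μ, PIT F Y U ω ≤ 1)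
          intro ω hω
          simp only [Set.mem_compl_iff, Set.mem_setOf_eq, not_le] at hω ⊢
          linarith
        rw [this]
        simp
  · -- threshold ⇒ marginal calibration
    intro hTh y
    have hmeas : Measurable fun ω => cdfAt (F ω) y := by
      have : Measurable fun G : Measure ℝ => G (Set.Iic y) :=
        Measure.measurable_coe measurableSet_Iic
      exact (this.comp hF).ennreal_toReal
    have hm : MeasurableSpace.comap (fun ω => cdfAt (F ω) y) inferInstance
        ≤ (inferInstance : MeasurableSpace Ω) := hmeas.comap_le
    have hsY : MeasurableSet {ω | Y ω ≤ y} := measurableSet_le hY measurable_const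
    exact (aux_condexp_integral_eq μ hm hsY (hTh y))

end
end

section
/- In a prediction space, assume that for every α ∈ (0,1) the lower quantile q_α^-(F) is measurable and a regular conditional distribution of Y given q_α^-(F) exists. If the predictive distribution F is auto-calibrated, then F is CEP calibrated, i.e., Q(Z_F ≤ α | q_α^-(F)) = α almost surely for every α ∈ (0,1). -/
open MeasureTheory ProbabilityTheory

noncomputable section

variable {Ω : Type*} [MeasurableSpace Ω]

namespace AutoCEP

open Set
open scoped ENNReal

/-- measurable surrogate for `(G, y) ↦ G (Iio y)` -/
def cL (p : Measure ℝ × ℝ) : ℝ≥0∞ :=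
  ⨆ q : ℚ, if (q : ℝ) < p.2 then p.1 (Set.Iic (q : ℝ)) else 0

/-- measurable surrogate for `(G, y) ↦ G (Iic y)` (valid for finite measures) -/
def cA (p : Measure ℝ × ℝ) : ℝ≥0∞ :=
  ⨅ q : ℚ, if p.2 < (q : ℝ) then p.1 (Set.Iic (q : ℝ)) else ⊤

lemma measurable_cL : Measurable cL := by
  refine Measurable.iSup fun q => Measurable.ite ?_ ?_ measurable_const
  · exact measurableSet_lt measurable_const measurable_snd
  · exact (Measure.measurable_coe measurableSet_Iic).comp measurable_fst

lemma measurable_cA : Measurable cA := by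
  refine Measurable.iInf fun q => Measurable.ite ?_ ?_ measurable_const
  · exact measurableSet_lt measurable_snd measurable_const
  · exact (Measure.measurable_coe measurableSet_Iic).comp measurable_fst

lemma Iio_eq_iUnion (y : ℝ) : Set.Iio y = ⋃ n : ℕ, Set.Iic (y - 1 / (n + 1)) := by
  ext x
  simp only [mem_Iio, mem_iUnion, mem_Iic]
  constructor
  · intro hx
    obtain ⟨n, hn⟩ := exists_nat_one_div_lt (sub_pos.mpr hx)
    exact ⟨n, by push_cast at hn ⊢; linarith⟩
  · rintro ⟨n, hn⟩
    have : (0:ℝ) < 1 / (n + 1) := by positivity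
    linarith

lemma cL_eq (G : Measure ℝ) (y : ℝ) : cL (G, y) = G (Set.Iio y) := by
  apply le_antisymm
  · refine iSup_le fun q => ?_
    split_ifs with h
    · exact measure_mono fun x hx => lt_of_le_of_lt hx h
    · exact zero_le
  · have h1 : G (Set.Iio y) = ⨆ n : ℕ, G (Set.Iic (y - 1 / (n + 1))) := by
      rw [Iio_eq_iUnion y]
      refine Directed.measure_iUnion ?_
      refine Monotone.directed_le fun n m hnm => Iic_subset_Iic.mpr ?_
      have : (1:ℝ) / (m + 1) ≤ 1 / (n + 1) := by
        apply one_div_le_one_div_of_le (by positivity)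
        exact_mod_cast by omega
      linarith
    rw [h1]
    refine iSup_le fun n => ?_
    have hlt : y - 1 / (n + 1) < y := by
      have : (0:ℝ) < 1 / (n + 1) := by positivity
      linarith
    obtain ⟨q, hq1, hq2⟩ := exists_rat_btwn hlt
    calc G (Set.Iic (y - 1 / (n + 1))) ≤ G (Set.Iic (q : ℝ)) :=
          measure_mono (Iic_subset_Iic.mpr hq1.le)
      _ ≤ _ := by
          refine le_trans ?_ (le_iSup _ q)
          rw [if_pos hq2]

lemma Iic_eq_iInter (y : ℝ) : Set.Iic y = ⋂ n : ℕ, Set.Iic (y + 1 / (n + 1)) := by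
  ext x
  simp only [mem_Iic, mem_iInter]
  constructor
  · intro hx n
    have : (0:ℝ) < 1 / (n + 1) := by positivity
    linarith
  · intro h
    by_contra hx
    push_neg at hx
    obtain ⟨n, hn⟩ := exists_nat_one_div_lt (sub_pos.mpr hx)
    have := h n
    push_cast at hn
    linarith

lemma cA_eq (G : Measure ℝ) [IsFiniteMeasure G] (y : ℝ) : cA (G, y) = G (Set.Iic y) := by
  apply le_antisymm
  · have h1 : Filter.Tendsto (fun n : ℕ => G (Set.Iic (y + 1 / (n + 1)))) Filter.atTop
        (nhds (G (Set.Iic y))) := by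
      rw [Iic_eq_iInter y]
      refine tendsto_measure_iInter_atTop (fun n => measurableSet_Iic.nullMeasurableSet) ?_
        ⟨0, measure_ne_top G _⟩
      intro n m hnm
      refine Iic_subset_Iic.mpr ?_
      have : (1:ℝ) / (m + 1) ≤ 1 / (n + 1) := by
        apply one_div_le_one_div_of_le (by positivity)
        exact_mod_cast by omega
      linarith
    have h2 : Filter.Tendsto (fun n : ℕ => G (Set.Iic (y + 1 / (n + 1)))) Filter.atTop
        (nhds (⨅ n : ℕ, G (Set.Iic (y + 1 / (n + 1))))) := by
      refine tendsto_atTop_iInf fun n m hnm => measure_mono (Iic_subset_Iic.mpr ?_)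
      have : (1:ℝ) / (m + 1) ≤ 1 / (n + 1) := by
        apply one_div_le_one_div_of_le (by positivity)
        exact_mod_cast by omega
      linarith
    have heq := tendsto_nhds_unique h1 h2
    rw [heq]
    refine le_iInf fun n => ?_
    have hlt : y < y + 1 / (n + 1) := by
      have : (0:ℝ) < 1 / (n + 1) := by positivity
      linarith
    obtain ⟨q, hq1, hq2⟩ := exists_rat_btwn hlt
    calc cA (G, y) ≤ if y < (q:ℝ) then G (Set.Iic (q:ℝ)) else ⊤ := iInf_le _ q
      _ ≤ G (Set.Iic (y + 1 / (n + 1))) := by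
          rw [if_pos hq1]
          exact measure_mono (Iic_subset_Iic.mpr hq2.le)
  · refine le_iInf fun q => ?_
    split_ifs with h
    · exact measure_mono (Iic_subset_Iic.mpr h.le)
    · exact le_top



variable {G : Measure ℝ} [IsProbabilityMeasure G] {α : ℝ}

lemma cdfAt_mono (G : Measure ℝ) [IsProbabilityMeasure G] : Monotone (cdfAt G) :=
  fun _ _ h => ENNReal.toReal_mono (measure_ne_top _ _) (measure_mono (Iic_subset_Iic.mpr h))

lemma ofReal_le_measure_Iic_iff {t : ℝ} (hα0 : 0 ≤ α) :
    ENNReal.ofReal α ≤ G (Set.Iic t) ↔ α ≤ cdfAt G t := by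
  rw [cdfAt, ← ENNReal.ofReal_le_iff_le_toReal (measure_ne_top _ _)]

lemma nonempty_quantSet (hα : α ∈ Set.Ioo (0:ℝ) 1) : {x : ℝ | α ≤ cdfAt G x}.Nonempty := by
  have h1 : Filter.Tendsto (fun x => G (Set.Iic x)) Filter.atTop (nhds (G Set.univ)) :=
    tendsto_measure_Iic_atTop G
  rw [measure_univ] at h1
  have hlt : ENNReal.ofReal α < 1 := ENNReal.ofReal_lt_one.mpr hα.2
  obtain ⟨x, hx⟩ := (h1.eventually (eventually_gt_nhds hlt)).exists
  exact ⟨x, (ofReal_le_measure_Iic_iff hα.1.le).mp hx.le⟩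

lemma bddBelow_quantSet (hα : α ∈ Set.Ioo (0:ℝ) 1) : BddBelow {x : ℝ | α ≤ cdfAt G x} := by
  have h1 : Filter.Tendsto (fun n : ℕ => G (Set.Iic (-(n:ℝ)))) Filter.atTop (nhds (G (⋂ n : ℕ, Set.Iic (-(n:ℝ))))) := by
    refine tendsto_measure_iInter_atTop (fun n => measurableSet_Iic.nullMeasurableSet)
      (fun n m hnm => Iic_subset_Iic.mpr (by exact_mod_cast neg_le_neg (Nat.cast_le.mpr hnm)))
      ⟨0, measure_ne_top G _⟩
  have hempty : (⋂ n : ℕ, Set.Iic (-(n:ℝ))) = ∅ := by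
    ext x
    simp only [mem_iInter, mem_Iic, mem_empty_iff_false, iff_false]
    push_neg
    obtain ⟨n, hn⟩ := exists_nat_gt (-x)
    exact ⟨n, by linarith⟩
  rw [hempty, measure_empty] at h1
  have hlt : (0:ℝ≥0∞) < ENNReal.ofReal α := ENNReal.ofReal_pos.mpr hα.1
  obtain ⟨n₀, hn₀⟩ := (h1.eventually (eventually_lt_nhds hlt)).exists
  refine ⟨-(n₀:ℝ), fun z hz => ?_⟩
  by_contra h
  push_neg at h
  have h2 : ENNReal.ofReal α ≤ G (Set.Iic (-(n₀:ℝ))) := by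
    refine le_trans ((ofReal_le_measure_Iic_iff hα.1.le).mpr hz) (measure_mono (Iic_subset_Iic.mpr h.le))
  exact absurd (lt_of_le_of_lt h2 hn₀) (lt_irrefl _)

lemma quantSet_upward {x x' : ℝ} (hx : α ≤ cdfAt G x) (h : x ≤ x') : α ≤ cdfAt G x' :=
  le_trans hx (cdfAt_mono G h)

lemma lowerQuantile_le_iff (hα : α ∈ Set.Ioo (0:ℝ) 1) {t : ℝ} :
    lowerQuantile G α ≤ t ↔ α ≤ cdfAt G t := by
  constructor
  · intro h
    rw [← ofReal_le_measure_Iic_iff hα.1.le, ← cA_eq G t]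
    refine le_iInf fun q => ?_
    split_ifs with hq
    · have : ∃ z ∈ {x : ℝ | α ≤ cdfAt G x}, z < (q:ℝ) :=
        (csInf_lt_iff (bddBelow_quantSet hα) (nonempty_quantSet hα)).mp
          (lt_of_le_of_lt h hq)
      obtain ⟨z, hz, hzq⟩ := this
      exact (ofReal_le_measure_Iic_iff hα.1.le).mpr (quantSet_upward hz hzq.le)
    · exact le_top
  · intro h
    exact csInf_le (bddBelow_quantSet hα) h

lemma le_cdfAt_lowerQuantile (hα : α ∈ Set.Ioo (0:ℝ) 1) :
    α ≤ cdfAt G (lowerQuantile G α) :=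
  (lowerQuantile_le_iff hα).mp le_rfl

lemma cdfAt_lt_of_lt_lowerQuantile (hα : α ∈ Set.Ioo (0:ℝ) 1) {y : ℝ}
    (hy : y < lowerQuantile G α) : cdfAt G y < α := by
  by_contra h
  push_neg at h
  exact absurd ((lowerQuantile_le_iff hα).mpr h) (not_le.mpr hy)

lemma measure_Iio_lowerQuantile_le (hα : α ∈ Set.Ioo (0:ℝ) 1) :
    G (Set.Iio (lowerQuantile G α)) ≤ ENNReal.ofReal α := by
  rw [← cL_eq G]
  refine iSup_le fun q => ?_
  split_ifs with hq
  · have := cdfAt_lt_of_lt_lowerQuantile hα hq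
    exact ((ENNReal.lt_ofReal_iff_toReal_lt (measure_ne_top _ _)).mpr this).le
  · exact zero_le



lemma measure_nullFlat (G : Measure ℝ) [IsFiniteMeasure G] (q : ℝ) :
    G {y | q < y ∧ G (Set.Ioc q y) = 0} = 0 := by
  set N := {y | q < y ∧ G (Set.Ioc q y) = 0} with hNdef
  have key : ∀ n : ℕ, G (N ∩ Set.Iic (n:ℝ)) = 0 := by
    intro n
    rcases Set.eq_empty_or_nonempty (N ∩ Set.Iic (n:ℝ)) with he | hne
    · simp [he]
    · have hbdd : BddAbove (N ∩ Set.Iic (n:ℝ)) := ⟨n, fun y hy => hy.2⟩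
      set s := sSup (N ∩ Set.Iic (n:ℝ)) with hs
      by_cases hsN : G (Set.Ioc q s) = 0
      · refine measure_mono_null (fun y hy => ?_) hsN
        exact ⟨hy.1.1, le_csSup hbdd hy⟩
      · obtain ⟨u, hu_mono, hu_tend, hu_mem⟩ := exists_seq_tendsto_sSup hne hbdd
        refine measure_mono_null (fun y hy => ?_) (measure_iUnion_null
          (fun k => (hu_mem k).1.2) : G (⋃ k : ℕ, Set.Ioc q (u k)) = 0)
        have hys : y < s := by
          rcases lt_or_eq_of_le (le_csSup hbdd hy) with h | h
          · exact h
          · exfalso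
            apply hsN
            have := hy.1.2
            rw [h] at this
            exact this
        obtain ⟨k, hk⟩ := (hu_tend.eventually (eventually_gt_nhds hys)).exists
        exact Set.mem_iUnion.mpr ⟨k, hy.1.1, hk.le⟩
  have hcover : N ⊆ ⋃ n : ℕ, N ∩ Set.Iic (n:ℝ) := by
    intro y hy
    obtain ⟨n, hn⟩ := exists_nat_ge y
    exact Set.mem_iUnion.mpr ⟨n, hy, hn⟩
  exact measure_mono_null hcover (measure_iUnion_null key)



instance : IsProbabilityMeasure unif01 :=
  ⟨by simp [unif01, Measure.restrict_apply, Real.volume_Icc]⟩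

lemma unif01_apply (S : Set ℝ) : unif01 S = volume (S ∩ Set.Icc (0:ℝ) 1) :=
  Measure.restrict_apply' measurableSet_Icc

lemma measurable_pitSet (G : Measure ℝ) {α : ℝ} :
    MeasurableSet {p : ℝ × ℝ | cdfLt G p.1 + p.2 * (cdfAt G p.1 - cdfLt G p.1) ≤ α} := by
  have h1 : Measurable fun y : ℝ => cdfLt G y := by
    have : Monotone fun y : ℝ => G (Set.Iio y) :=
      fun a b hab => measure_mono (Set.Iio_subset_Iio hab)
    exact ENNReal.measurable_toReal.comp this.measurable
  have h2 : Measurable fun y : ℝ => cdfAt G y := by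
    have : Monotone fun y : ℝ => G (Set.Iic y) :=
      fun a b hab => measure_mono (Set.Iic_subset_Iic.mpr hab)
    exact ENNReal.measurable_toReal.comp this.measurable
  exact measurableSet_le
    (((h1.comp measurable_fst).add
      (measurable_snd.mul ((h2.comp measurable_fst).sub (h1.comp measurable_fst)))))
    measurable_const

lemma pit_measure (G : Measure ℝ) [IsProbabilityMeasure G] {α : ℝ} (hα : α ∈ Set.Ioo (0:ℝ) 1) :
    (G.prod unif01) {p : ℝ × ℝ | cdfLt G p.1 + p.2 * (cdfAt G p.1 - cdfLt G p.1) ≤ α}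
      = ENNReal.ofReal α := by
  set q := lowerQuantile G α with hq
  set E := {p : ℝ × ℝ | cdfLt G p.1 + p.2 * (cdfAt G p.1 - cdfLt G p.1) ≤ α} with hE
  have hEm : MeasurableSet E := measurable_pitSet G
  have hAq : α ≤ cdfAt G q := le_cdfAt_lowerQuantile hα
  have hLq : G (Set.Iio q) ≤ ENNReal.ofReal α := measure_Iio_lowerQuantile_le hα
  have hLqα : cdfLt G q ≤ α := by
    have := ENNReal.toReal_mono ENNReal.ofReal_ne_top hLq
    rwa [ENNReal.toReal_ofReal hα.1.le] at this
  have hLA : ∀ y : ℝ, cdfLt G y ≤ cdfAt G y := fun y =>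
    ENNReal.toReal_mono (measure_ne_top _ _) (measure_mono Set.Iio_subset_Iic_self)
  -- split E into three parts
  have hsplit : E = (E ∩ Set.Iio q ×ˢ (Set.univ : Set ℝ)) ∪
      (E ∩ {q} ×ˢ (Set.univ : Set ℝ)) ∪ (E ∩ Set.Ioi q ×ˢ (Set.univ : Set ℝ)) := by
    ext p
    simp only [Set.mem_union, Set.mem_inter_iff, Set.mem_prod, Set.mem_univ, and_true,
      Set.mem_Iio, Set.mem_Ioi, Set.mem_singleton_iff]
    rcases lt_trichotomy p.1 q with h | h | h
    · constructor
      · intro hp; exact Or.inl (Or.inl ⟨hp, h⟩)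
      · rintro ((⟨hp, _⟩ | ⟨hp, _⟩) | ⟨hp, _⟩) <;> exact hp
    · constructor
      · intro hp; exact Or.inl (Or.inr ⟨hp, h⟩)
      · rintro ((⟨hp, _⟩ | ⟨hp, _⟩) | ⟨hp, _⟩) <;> exact hp
    · constructor
      · intro hp; exact Or.inr ⟨hp, h⟩
      · rintro ((⟨hp, _⟩ | ⟨hp, _⟩) | ⟨hp, _⟩) <;> exact hp
  have hmeas2 : MeasurableSet (E ∩ {q} ×ˢ (Set.univ : Set ℝ)) :=
    hEm.inter ((measurableSet_singleton q).prod MeasurableSet.univ)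
  have hmeas3 : MeasurableSet (E ∩ Set.Ioi q ×ˢ (Set.univ : Set ℝ)) :=
    hEm.inter (measurableSet_Ioi.prod MeasurableSet.univ)
  have hdisj1 : Disjoint ((E ∩ Set.Iio q ×ˢ (Set.univ : Set ℝ)))
      (E ∩ {q} ×ˢ (Set.univ : Set ℝ)) := by
    refine Set.disjoint_left.mpr fun p hp hp' => ?_
    have h1 : p.1 < q := hp.2.1
    have h2 : p.1 = q := hp'.2.1
    exact absurd h2 (ne_of_lt h1)
  have hdisj2 : Disjoint ((E ∩ Set.Iio q ×ˢ (Set.univ : Set ℝ)) ∪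
      (E ∩ {q} ×ˢ (Set.univ : Set ℝ))) (E ∩ Set.Ioi q ×ˢ (Set.univ : Set ℝ)) := by
    refine Set.disjoint_left.mpr fun p hp hp' => ?_
    have h3 : q < p.1 := hp'.2.1
    rcases hp with hp | hp
    · exact absurd h3 (not_lt.mpr hp.2.1.le)
    · exact absurd h3 (not_lt.mpr (le_of_eq hp.2.1))
  have hval : (G.prod unif01) E = (G.prod unif01) (E ∩ Set.Iio q ×ˢ (Set.univ : Set ℝ)) +
      (G.prod unif01) (E ∩ {q} ×ˢ (Set.univ : Set ℝ)) +
      (G.prod unif01) (E ∩ Set.Ioi q ×ˢ (Set.univ : Set ℝ)) := by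
    conv_lhs => rw [hsplit]
    rw [measure_union hdisj2 hmeas3, measure_union hdisj1 hmeas2]
  -- part 1
  have hpart1 : (G.prod unif01) (E ∩ Set.Iio q ×ˢ (Set.univ : Set ℝ)) = G (Set.Iio q) := by
    apply le_antisymm
    · calc (G.prod unif01) (E ∩ Set.Iio q ×ˢ (Set.univ : Set ℝ))
          ≤ (G.prod unif01) (Set.Iio q ×ˢ (Set.univ : Set ℝ)) :=
            measure_mono Set.inter_subset_right
        _ = G (Set.Iio q) := by rw [Measure.prod_prod, measure_univ, mul_one]
    · have hsub : Set.Iio q ×ˢ Set.Icc (0:ℝ) 1 ⊆ E ∩ Set.Iio q ×ˢ (Set.univ : Set ℝ) := by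
        rintro ⟨y, u⟩ ⟨hy, hu⟩
        refine ⟨?_, hy, Set.mem_univ _⟩
        have hb : 0 ≤ cdfAt G y - cdfLt G y := sub_nonneg.mpr (hLA y)
        have : u * (cdfAt G y - cdfLt G y) ≤ cdfAt G y - cdfLt G y := by
          nlinarith [hu.1, hu.2]
        have hlt : cdfAt G y < α := cdfAt_lt_of_lt_lowerQuantile hα hy
        simp only [hE, Set.mem_setOf_eq]
        linarith
      have h01 : unif01 (Set.Icc (0:ℝ) 1) = 1 := measure_univ (μ := unif01) ▸ by
        rw [unif01_apply, Set.inter_self, Real.volume_Icc]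
        norm_num
      calc G (Set.Iio q) = (G.prod unif01) (Set.Iio q ×ˢ Set.Icc (0:ℝ) 1) := by
            rw [Measure.prod_prod, h01, mul_one]
        _ ≤ _ := measure_mono hsub
  -- part 3 is zero
  have hpart3 : (G.prod unif01) (E ∩ Set.Ioi q ×ˢ (Set.univ : Set ℝ)) = 0 := by
    set N := {y | q < y ∧ G (Set.Ioc q y) = 0} with hN
    have hsub : E ∩ Set.Ioi q ×ˢ (Set.univ : Set ℝ) ⊆
        (N ×ˢ (Set.univ : Set ℝ)) ∪ ((Set.univ : Set ℝ) ×ˢ ({0} : Set ℝ)) ∪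
        ((Set.univ : Set ℝ) ×ˢ (Set.Icc (0:ℝ) 1)ᶜ) := by
      rintro ⟨y, u⟩ ⟨hpE, hy, -⟩
      by_cases hu : u ∈ Set.Icc (0:ℝ) 1
      swap
      · exact Or.inr ⟨Set.mem_univ _, hu⟩
      simp only [hE, Set.mem_setOf_eq] at hpE
      have hy' : q < y := hy
      have hIq : ENNReal.ofReal α ≤ G (Set.Iic q) := (ofReal_le_measure_Iic_iff hα.1.le).mpr hAq
      have hLy : α ≤ cdfLt G y := by
        have h1 : G (Set.Iic q) ≤ G (Set.Iio y) := measure_mono fun x hx =>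
          lt_of_le_of_lt hx hy'
        have h2 := ENNReal.toReal_mono (measure_ne_top _ _) (le_trans hIq h1)
        rwa [ENNReal.toReal_ofReal hα.1.le] at h2
      have hb : 0 ≤ cdfAt G y - cdfLt G y := sub_nonneg.mpr (hLA y)
      have hub : 0 ≤ u * (cdfAt G y - cdfLt G y) := mul_nonneg hu.1 hb
      have hLy' : cdfLt G y = α := le_antisymm (by linarith) hLy
      rcases eq_or_lt_of_le (hLA y) with hj | hj
      · -- no jump: y ∈ N
        refine Or.inl (Or.inl ⟨⟨hy', ?_⟩, Set.mem_univ _⟩)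
        have hAy : cdfAt G y = α := by rw [← hj, hLy']
        have h1 : G (Set.Iic y) = ENNReal.ofReal α := by
          rw [← ENNReal.ofReal_toReal (measure_ne_top G (Set.Iic y))]
          rw [cdfAt] at hAy
          rw [hAy]
        have h2 : G (Set.Iic q) = ENNReal.ofReal α := by
          refine le_antisymm ?_ hIq
          calc G (Set.Iic q) ≤ G (Set.Iic y) := measure_mono (Set.Iic_subset_Iic.mpr hy'.le)
            _ = _ := h1
        have : Set.Ioc q y = Set.Iic y \ Set.Iic q := by
          ext x
          simp only [Set.mem_Ioc, Set.mem_diff, Set.mem_Iic, not_le]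
          tauto
        rw [this, measure_diff (Set.Iic_subset_Iic.mpr hy'.le)
          measurableSet_Iic.nullMeasurableSet (measure_ne_top _ _), h1, h2, tsub_self]
      · -- jump: u must be 0
        have hu0 : u = 0 := by
          by_contra h0
          have hupos : 0 < u := lt_of_le_of_ne hu.1 (Ne.symm h0)
          have : 0 < u * (cdfAt G y - cdfLt G y) := mul_pos hupos (by linarith)
          linarith
        exact Or.inl (Or.inr ⟨Set.mem_univ _, by simp [hu0]⟩)
    refine measure_mono_null hsub ?_
    refine measure_union_null (measure_union_null ?_ ?_) ?_
    · rw [Measure.prod_prod, measure_nullFlat G q, zero_mul]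
    · rw [Measure.prod_prod]
      have : unif01 ({0} : Set ℝ) = 0 := by
        rw [unif01_apply]
        exact measure_mono_null Set.inter_subset_left Real.volume_singleton
      rw [this, mul_zero]
    · rw [Measure.prod_prod]
      have : unif01 (Set.Icc (0:ℝ) 1)ᶜ = 0 := by
        rw [unif01_apply, Set.compl_inter_self]
        exact measure_empty
      rw [this, mul_zero]
  -- part 2
  have hpart2 : E ∩ {q} ×ˢ (Set.univ : Set ℝ) =
      {q} ×ˢ {u : ℝ | cdfLt G q + u * (cdfAt G q - cdfLt G q) ≤ α} := by
    ext ⟨y, u⟩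
    simp only [hE, Set.mem_inter_iff, Set.mem_setOf_eq, Set.mem_prod, Set.mem_singleton_iff,
      Set.mem_univ, and_true]
    constructor
    · rintro ⟨h1, h2⟩; subst h2; exact ⟨rfl, h1⟩
    · rintro ⟨h2, h1⟩; subst h2; exact ⟨h1, rfl⟩
  rw [hval, hpart1, hpart3, add_zero, hpart2, Measure.prod_prod]
  -- now case on jump at q
  rcases eq_or_lt_of_le (hLA q) with hj | hj
  · -- no jump at q
    have hGq : G {q} = 0 := by
      have hsub : ({q} : Set ℝ) ⊆ Set.Iic q \ Set.Iio q := by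
        intro x hx
        rw [Set.mem_singleton_iff] at hx
        subst hx
        exact ⟨Set.mem_Iic.mpr le_rfl, by simp⟩
      refine measure_mono_null hsub ?_
      have heq : G (Set.Iic q) = G (Set.Iio q) :=
        (ENNReal.toReal_eq_toReal_iff' (measure_ne_top _ _) (measure_ne_top _ _)).mp hj.symm
      rw [measure_diff Set.Iio_subset_Iic_self measurableSet_Iio.nullMeasurableSet
        (measure_ne_top _ _), heq, tsub_self]
    rw [hGq, zero_mul, add_zero]
    have hLqeq : cdfLt G q = α := by linarith [hAq, hLqα, hj]
    rw [← ENNReal.ofReal_toReal (measure_ne_top G (Set.Iio q))]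
    rw [show (G (Set.Iio q)).toReal = cdfLt G q from rfl, hLqeq]
  · -- jump at q
    set Lq := cdfLt G q with hLqdef
    set j := cdfAt G q - cdfLt G q with hjdef
    have hjpos : 0 < j := by simp only [hjdef]; linarith
    set c := (α - Lq) / j with hc
    have hc0 : 0 ≤ c := div_nonneg (by linarith) hjpos.le
    have hc1 : c ≤ 1 := by
      rw [hc, div_le_one hjpos]
      simp only [hjdef]
      linarith
    have hSq : {u : ℝ | Lq + u * j ≤ α} = Set.Iic c := by
      ext u
      simp only [Set.mem_setOf_eq, Set.mem_Iic, hc]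
      rw [le_div_iff₀ hjpos]
      constructor <;> intro h <;> linarith
    have hu : unif01 {u : ℝ | Lq + u * j ≤ α} = ENNReal.ofReal c := by
      rw [hSq, unif01_apply]
      have : Set.Iic c ∩ Set.Icc (0:ℝ) 1 = Set.Icc 0 c := by
        ext u
        simp only [Set.mem_inter_iff, Set.mem_Iic, Set.mem_Icc]
        constructor
        · rintro ⟨h1, h2, h3⟩; exact ⟨h2, h1⟩
        · rintro ⟨h1, h2⟩; exact ⟨h2, h1, le_trans h2 hc1⟩
      rw [this, Real.volume_Icc, sub_zero]
    have hGq : G {q} = ENNReal.ofReal j := by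
      have heq : ({q} : Set ℝ) = Set.Iic q \ Set.Iio q := by
        ext x
        simp only [Set.mem_singleton_iff, Set.mem_diff, Set.mem_Iic, Set.mem_Iio, not_lt]
        constructor
        · intro h; subst h; exact ⟨le_refl _, le_refl _⟩
        · rintro ⟨h1, h2⟩; exact le_antisymm h1 h2
      have hd : G (Set.Iic q \ Set.Iio q) = G (Set.Iic q) - G (Set.Iio q) :=
        measure_diff Set.Iio_subset_Iic_self measurableSet_Iio.nullMeasurableSet
          (measure_ne_top _ _)
      have hsub2 : G (Set.Iic q) - G (Set.Iio q)
          = ENNReal.ofReal (cdfAt G q) - ENNReal.ofReal (cdfLt G q) := by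
        rw [← ENNReal.ofReal_toReal (measure_ne_top G (Set.Iic q)),
          ← ENNReal.ofReal_toReal (measure_ne_top G (Set.Iio q))]
        rfl
      have h0L : (0:ℝ) ≤ cdfLt G q := ENNReal.toReal_nonneg
      rw [heq, hd, hsub2, ← ENNReal.ofReal_sub _ h0L]
    rw [hu, hGq, ← ENNReal.ofReal_mul (le_of_lt hjpos)]
    have hjc : j * c = α - Lq := by
      rw [hc, mul_div_cancel₀ _ (ne_of_gt hjpos)]
    rw [hjc, ← ENNReal.ofReal_toReal (measure_ne_top G (Set.Iio q)),
      ← ENNReal.ofReal_add ENNReal.toReal_nonneg (by linarith : (0:ℝ) ≤ α - Lq)]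
    congr 1
    show Lq + (α - Lq) = α
    ring



lemma measP : MeasurableSet {G : Measure ℝ | G Set.univ = 1} :=
  (Measure.measurable_coe MeasurableSet.univ) (measurableSet_singleton 1)

lemma quantile_preimage {α : ℝ} (hα : α ∈ Set.Ioo (0:ℝ) 1) {B : Set ℝ} (hB : MeasurableSet B) :
    MeasurableSet ((fun G : Measure ℝ => lowerQuantile G α) ⁻¹' B
      ∩ {G : Measure ℝ | G Set.univ = 1}) := by
  set P := {G : Measure ℝ | G Set.univ = 1} with hPdef
  set f := fun G : Measure ℝ => lowerQuantile G α with hf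
  have hIicSet : ∀ t : ℝ, MeasurableSet (f ⁻¹' Set.Iic t ∩ P) := by
    intro t
    have he : f ⁻¹' Set.Iic t ∩ P = {G : Measure ℝ | ENNReal.ofReal α ≤ G (Set.Iic t)} ∩ P := by
      ext G
      simp only [Set.mem_inter_iff, Set.mem_preimage, Set.mem_Iic, Set.mem_setOf_eq]
      constructor
      · rintro ⟨h1, h2⟩
        haveI : IsProbabilityMeasure G := ⟨h2⟩
        exact ⟨(ofReal_le_measure_Iic_iff hα.1.le).mpr ((lowerQuantile_le_iff hα).mp h1), h2⟩
      · rintro ⟨h1, h2⟩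
        haveI : IsProbabilityMeasure G := ⟨h2⟩
        exact ⟨(lowerQuantile_le_iff hα).mpr ((ofReal_le_measure_Iic_iff hα.1.le).mp h1), h2⟩
    rw [he]
    exact (measurableSet_le measurable_const (Measure.measurable_coe measurableSet_Iic)).inter measP
  have hB2 : MeasurableSet[MeasurableSpace.generateFrom (Set.range (Set.Iic : ℝ → Set ℝ))] B := by
    rw [← borel_eq_generateFrom_Iic ℝ, ← BorelSpace.measurable_eq (α := ℝ)]
    exact hB
  let m' : MeasurableSpace ℝ :=
    { MeasurableSet' := fun s => MeasurableSet (f ⁻¹' s ∩ P)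
      measurableSet_empty := by simp
      measurableSet_compl := fun s hs => by
        have he : f ⁻¹' sᶜ ∩ P = P \ (f ⁻¹' s ∩ P) := by
          ext G
          simp only [Set.mem_inter_iff, Set.mem_preimage, Set.mem_compl_iff, Set.mem_diff]
          tauto
        show MeasurableSet (f ⁻¹' sᶜ ∩ P)
        rw [he]
        exact measP.diff hs
      measurableSet_iUnion := fun g hg => by
        have he : f ⁻¹' (⋃ i, g i) ∩ P = ⋃ i, (f ⁻¹' g i ∩ P) := by
          ext G
          simp only [Set.mem_inter_iff, Set.mem_preimage, Set.mem_iUnion]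
          tauto
        show MeasurableSet (f ⁻¹' (⋃ i, g i) ∩ P)
        rw [he]
        exact MeasurableSet.iUnion hg }
  have hgen : MeasurableSpace.generateFrom (Set.range (Set.Iic : ℝ → Set ℝ)) ≤ m' :=
    MeasurableSpace.generateFrom_le (by rintro s ⟨t, rfl⟩; exact hIicSet t)
  exact hgen B hB2


/-- The identity kernel on probability measures (junk value `dirac 0` elsewhere). -/
def kappa : Kernel (Measure ℝ) ℝ where
  toFun := fun G => if G Set.univ = 1 then G else Measure.dirac 0
  measurable' := Measurable.ite measP measurable_id measurable_const

lemma kappa_apply (G : Measure ℝ) :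
    kappa G = if G Set.univ = 1 then G else Measure.dirac 0 := rfl

instance : IsMarkovKernel kappa := by
  refine ⟨fun G => ?_⟩
  by_cases h : G Set.univ = 1
  · rw [kappa_apply, if_pos h]
    exact ⟨h⟩
  · rw [kappa_apply, if_neg h]
    infer_instance

lemma isCountablySpanning_range_Iic :
    IsCountablySpanning (Set.range (Set.Iic : ℝ → Set ℝ)) := by
  refine ⟨fun n => Set.Iic (n : ℝ), fun n => ⟨n, rfl⟩, ?_⟩
  ext x
  simp only [Set.mem_iUnion, Set.mem_Iic, Set.mem_univ, iff_true]
  obtain ⟨n, hn⟩ := exists_nat_ge x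
  exact ⟨n, hn⟩

lemma integrable_cdfAt_comp {Ω : Type*} [MeasurableSpace Ω] (μ : Measure Ω)
    [IsProbabilityMeasure μ] {F : Ω → Measure ℝ} (hF : Measurable F)
    (hprob : ∀ ω, IsProbabilityMeasure (F ω)) (t : ℝ) :
    Integrable (fun ω => cdfAt (F ω) t) μ := by
  refine (integrable_const (1:ℝ)).mono' ?_ (Filter.Eventually.of_forall fun ω => ?_)
  · exact (((Measure.measurable_coe measurableSet_Iic).comp hF).ennreal_toReal).aestronglyMeasurable
  · haveI := hprob ω
    have h0 : (0:ℝ) ≤ cdfAt (F ω) t := ENNReal.toReal_nonneg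
    rw [Real.norm_eq_abs, abs_of_nonneg h0, cdfAt]
    calc (F ω (Set.Iic t)).toReal ≤ (F ω Set.univ).toReal :=
          ENNReal.toReal_mono (measure_ne_top _ _) (measure_mono (Set.subset_univ _))
      _ = 1 := by rw [measure_univ, ENNReal.toReal_one]

/-- Auto-calibration means the joint law of `(F, Y)` equals the compound measure
`(μ.map F) ⊗ₘ id`. -/
lemma law_eq_compProd {Ω : Type*} [MeasurableSpace Ω] (μ : Measure Ω) [IsProbabilityMeasure μ]
    {F : Ω → Measure ℝ} {Y : Ω → ℝ} (hF : Measurable F) (hY : Measurable Y)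
    (hprob : ∀ ω, IsProbabilityMeasure (F ω))
    (hac : AutoCalibrated μ F Y) :
    μ.map (fun ω => (F ω, Y ω)) = (μ.map F) ⊗ₘ kappa := by
  haveI : IsProbabilityMeasure (μ.map F) := Measure.isProbabilityMeasure_map hF.aemeasurable
  haveI : IsProbabilityMeasure (μ.map (fun ω => (F ω, Y ω))) :=
    Measure.isProbabilityMeasure_map (hF.prodMk hY).aemeasurable
  have hgenIic : MeasurableSpace.generateFrom (Set.range (Set.Iic : ℝ → Set ℝ))
      = Real.measurableSpace := by
    rw [BorelSpace.measurable_eq (α := ℝ), borel_eq_generateFrom_Iic ℝ]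
  have hgen : (inferInstance : MeasurableSpace (Measure ℝ × ℝ)) = MeasurableSpace.generateFrom
      (Set.image2 (· ×ˢ ·) {S : Set (Measure ℝ) | MeasurableSet S}
        (Set.range (Set.Iic : ℝ → Set ℝ))) :=
    (generateFrom_eq_prod MeasurableSpace.generateFrom_measurableSet hgenIic
      isCountablySpanning_measurableSet isCountablySpanning_range_Iic).symm
  refine ext_of_generate_finite _ hgen
    (MeasurableSpace.isPiSystem_measurableSet.prod isPiSystem_Iic) ?_ (by simp)
  rintro s ⟨S, hSmem, _, ⟨t, rfl⟩, rfl⟩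
  have hS : MeasurableSet S := hSmem
  rw [Measure.map_apply (hF.prodMk hY) (hS.prod measurableSet_Iic),
    Measure.compProd_apply_prod hS measurableSet_Iic]
  have hpre : (fun ω => (F ω, Y ω)) ⁻¹' (S ×ˢ Set.Iic t) = F ⁻¹' S ∩ {ω | Y ω ≤ t} := by
    ext ω
    simp [Set.mem_prod]
  rw [hpre]
  symm
  rw [setLIntegral_map hS (kappa.measurable_coe measurableSet_Iic) hF]
  have h1 : ∀ ω : Ω, kappa (F ω) (Set.Iic t) = ENNReal.ofReal (cdfAt (F ω) t) := by
    intro ω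
    haveI := hprob ω
    rw [kappa_apply, if_pos (hprob ω).measure_univ, cdfAt,
      ENNReal.ofReal_toReal (measure_ne_top _ _)]
  rw [lintegral_congr fun ω => h1 ω]
  have hint : Integrable (fun ω => cdfAt (F ω) t) μ := integrable_cdfAt_comp μ hF hprob t
  rw [← ofReal_integral_eq_lintegral_ofReal hint.integrableOn
    (Filter.Eventually.of_forall fun ω => ENNReal.toReal_nonneg)]
  have hs_m : MeasurableSet[MeasurableSpace.comap F inferInstance] (F ⁻¹' S) := ⟨S, hS, rfl⟩
  have hYt : MeasurableSet {ω : Ω | Y ω ≤ t} := hY measurableSet_Iic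
  have hind_int : Integrable (Set.indicator {ω : Ω | Y ω ≤ t} fun _ => (1:ℝ)) μ :=
    (integrable_const (1:ℝ)).indicator hYt
  rw [integral_congr_ae (Filter.EventuallyEq.restrict (hac t)),
    setIntegral_condExp hF.comap_le hind_int hs_m,
    setIntegral_indicator hYt, setIntegral_const, smul_eq_mul, mul_one,
    measureReal_def, ENNReal.ofReal_toReal (measure_ne_top _ _)]

end AutoCEP


/-- **Theorem (Statement 3).** In a prediction space, assume that for every `α ∈ (0,1)` the
lower quantile `q_α^-(F)` is measurable (so that a regular conditional distribution of `Y`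
given `q_α^-(F)` exists).  If `F` is auto-calibrated, then `F` is CEP calibrated. -/
theorem auto_implies_cep
    {Ω : Type*} [MeasurableSpace Ω] (μ : Measure Ω) (F : Ω → Measure ℝ) (Y U : Ω → ℝ)
    (hps : IsPredictionSpace μ F Y U)
    (hqmeas : ∀ α ∈ Set.Ioo (0:ℝ) 1, Measurable (fun ω => lowerQuantile (F ω) α))
    (hac : AutoCalibrated μ F Y) :
    CEPCalibrated μ F Y U := by
  intro α hα
  haveI := hps.isProb
  have hF := hps.measF
  have hY := hps.measY
  have hU := hps.measU
  have hprob := hps.probF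
  have hFY : Measurable fun ω => (F ω, Y ω) := hF.prodMk hY
  -- measurability of the PIT
  have hPIT_eq : PIT F Y U = fun ω => (AutoCEP.cL (F ω, Y ω)).toReal
      + U ω * ((AutoCEP.cA (F ω, Y ω)).toReal - (AutoCEP.cL (F ω, Y ω)).toReal) := by
    funext ω
    haveI := hprob ω
    rw [PIT, cdfAt, cdfLt, AutoCEP.cL_eq (F ω) (Y ω), AutoCEP.cA_eq (F ω) (Y ω)]
  have hPITmeas : Measurable (PIT F Y U) := by
    rw [hPIT_eq]
    exact ((AutoCEP.measurable_cL.comp hFY).ennreal_toReal).add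
      (hU.mul (((AutoCEP.measurable_cA.comp hFY).ennreal_toReal).sub
        ((AutoCEP.measurable_cL.comp hFY).ennreal_toReal)))
  set A := {ω | PIT F Y U ω ≤ α} with hAdef
  have hAmeas : MeasurableSet A := measurableSet_le hPITmeas measurable_const
  -- the key identity
  have key : ∀ T : Set (Measure ℝ), MeasurableSet T →
      μ (F ⁻¹' T ∩ A) = ENNReal.ofReal α * μ (F ⁻¹' T) := by
    intro T hT
    have hclaimA : μ.map (fun ω => (F ω, Y ω)) = (μ.map F) ⊗ₘ AutoCEP.kappa :=
      AutoCEP.law_eq_compProd μ hF hY hprob hac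
    -- independence of (F, Y) and U
    have hindep : IndepFun (fun ω => (F ω, Y ω)) U μ := by
      rw [IndepFun_iff_Indep]
      have h1 : Measurable[MeasurableSpace.comap F inferInstance
          ⊔ MeasurableSpace.comap Y inferInstance] F :=
        measurable_iff_comap_le.mpr le_sup_left
      have h2 : Measurable[MeasurableSpace.comap F inferInstance
          ⊔ MeasurableSpace.comap Y inferInstance] Y :=
        measurable_iff_comap_le.mpr le_sup_right
      have hle : MeasurableSpace.comap (fun ω => (F ω, Y ω)) inferInstance
          ≤ MeasurableSpace.comap F inferInstance ⊔ MeasurableSpace.comap Y inferInstance :=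
        measurable_iff_comap_le.mp (h1.prodMk h2)
      have hind := (Indep_iff _ _ μ).mp hps.indepU
      refine ProbabilityTheory.Indep.symm ((Indep_iff _ _ μ).mpr fun t1 t2 ht1 ht2 => ?_)
      exact hind t1 t2 ht1 (hle t2 ht2)
    have hmap : μ.map (fun ω => ((F ω, Y ω), U ω))
        = (μ.map (fun ω => (F ω, Y ω))).prod unif01 := by
      rw [← hps.unifU]
      exact (indepFun_iff_map_prod_eq_prod_map_map hFY.aemeasurable hU.aemeasurable).mp hindep
    set W : Set ((Measure ℝ × ℝ) × ℝ) := {x | x.1.1 ∈ T ∧ (AutoCEP.cL x.1).toReal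
      + x.2 * ((AutoCEP.cA x.1).toReal - (AutoCEP.cL x.1).toReal) ≤ α} with hWdef
    have hWmeas : MeasurableSet W := by
      have hcL : Measurable fun x : (Measure ℝ × ℝ) × ℝ => (AutoCEP.cL x.1).toReal :=
        (AutoCEP.measurable_cL.comp measurable_fst).ennreal_toReal
      have hcA : Measurable fun x : (Measure ℝ × ℝ) × ℝ => (AutoCEP.cA x.1).toReal :=
        (AutoCEP.measurable_cA.comp measurable_fst).ennreal_toReal
      rw [hWdef, Set.setOf_and]
      exact ((measurable_fst.comp measurable_fst) hT).inter
        (measurableSet_le (hcL.add (measurable_snd.mul (hcA.sub hcL))) measurable_const)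
    have hpre : (fun ω => ((F ω, Y ω), U ω)) ⁻¹' W = F ⁻¹' T ∩ A := by
      ext ω
      haveI := hprob ω
      simp only [hWdef, Set.mem_preimage, Set.mem_setOf_eq, Set.mem_inter_iff, hAdef]
      rw [AutoCEP.cL_eq (F ω) (Y ω), AutoCEP.cA_eq (F ω) (Y ω)]
      constructor
      · rintro ⟨hh1, hh2⟩
        exact ⟨hh1, by rw [PIT, cdfAt, cdfLt]; exact hh2⟩
      · rintro ⟨hh1, hh2⟩
        rw [PIT, cdfAt, cdfLt] at hh2
        exact ⟨hh1, hh2⟩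
    have haeP : ∀ᵐ G ∂(μ.map F), G Set.univ = 1 := by
      have hcompl : {G : Measure ℝ | ¬ G Set.univ = 1} = {G : Measure ℝ | G Set.univ = 1}ᶜ := rfl
      rw [ae_iff, hcompl, Measure.map_apply hF AutoCEP.measP.compl]
      convert measure_empty (μ := μ)
      ext ω
      simp only [Set.mem_preimage, Set.mem_compl_iff, Set.mem_setOf_eq, Set.mem_empty_iff_false,
        iff_false, not_not]
      exact (hprob ω).measure_univ
    have hinner : ∀ᵐ G ∂(μ.map F),
        ∫⁻ y, unif01 (Prod.mk (G, y) ⁻¹' W) ∂(AutoCEP.kappa G)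
          = T.indicator (fun _ => ENNReal.ofReal α) G := by
      filter_upwards [haeP] with G hG
      haveI : IsProbabilityMeasure G := ⟨hG⟩
      rw [AutoCEP.kappa_apply, if_pos hG]
      by_cases hGT : G ∈ T
      · have hsl : ∀ y : ℝ, Prod.mk (G, y) ⁻¹' W
            = {u : ℝ | cdfLt G y + u * (cdfAt G y - cdfLt G y) ≤ α} := by
          intro y
          ext u
          simp only [hWdef, Set.mem_preimage, Set.mem_setOf_eq, Set.mem_Iic]
          rw [AutoCEP.cL_eq G y, AutoCEP.cA_eq G y]
          simp [hGT, cdfAt, cdfLt]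
        have hE : (fun y : ℝ => unif01 (Prod.mk (G, y) ⁻¹' W))
            = fun y => unif01 {u : ℝ | cdfLt G y + u * (cdfAt G y - cdfLt G y) ≤ α} := by
          funext y; rw [hsl y]
        rw [hE, Set.indicator_of_mem hGT]
        have := AutoCEP.pit_measure G hα
        rw [Measure.prod_apply (AutoCEP.measurable_pitSet G (α := α))] at this
        exact this
      · have hsl : ∀ y : ℝ, Prod.mk (G, y) ⁻¹' W = (∅ : Set ℝ) := by
          intro y
          ext u
          simp [hWdef, hGT]
        simp only [hsl, measure_empty, lintegral_zero, Set.indicator_of_notMem hGT]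
    calc μ (F ⁻¹' T ∩ A) = μ.map (fun ω => ((F ω, Y ω), U ω)) W := by
          rw [Measure.map_apply (hFY.prodMk hU) hWmeas, hpre]
      _ = ((μ.map (fun ω => (F ω, Y ω))).prod unif01) W := by rw [hmap]
      _ = ∫⁻ p, unif01 (Prod.mk p ⁻¹' W) ∂(μ.map (fun ω => (F ω, Y ω))) :=
          Measure.prod_apply hWmeas
      _ = ∫⁻ p, unif01 (Prod.mk p ⁻¹' W) ∂((μ.map F) ⊗ₘ AutoCEP.kappa) := by rw [hclaimA]
      _ = ∫⁻ G, ∫⁻ y, unif01 (Prod.mk (G, y) ⁻¹' W) ∂(AutoCEP.kappa G) ∂(μ.map F) :=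
          Measure.lintegral_compProd (measurable_measure_prodMk_left hWmeas)
      _ = ∫⁻ G, T.indicator (fun _ => ENNReal.ofReal α) G ∂(μ.map F) :=
          lintegral_congr_ae hinner
      _ = ENNReal.ofReal α * μ (F ⁻¹' T) := by
          rw [lintegral_indicator hT, setLIntegral_const, Measure.map_apply hF hT]
  -- conclude via uniqueness of conditional expectation
  have hqm : Measurable (fun ω => lowerQuantile (F ω) α) := hqmeas α hα
  have hm : MeasurableSpace.comap (fun ω => lowerQuantile (F ω) α) inferInstance
      ≤ (inferInstance : MeasurableSpace Ω) := hqm.comap_le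
  have hf_int : Integrable (Set.indicator A fun _ => (1:ℝ)) μ :=
    (integrable_const (1:ℝ)).indicator hAmeas
  refine Filter.EventuallyEq.symm
    (ae_eq_condExp_of_forall_setIntegral_eq hm hf_int
      (fun s _ _ => (integrable_const α).integrableOn) ?_
      (StronglyMeasurable.aestronglyMeasurable stronglyMeasurable_const))
  rintro s ⟨B, hB, rfl⟩ -
  set T := (fun G : Measure ℝ => lowerQuantile G α) ⁻¹' B
    ∩ {G : Measure ℝ | G Set.univ = 1} with hTdef
  have hTm : MeasurableSet T := AutoCEP.quantile_preimage hα hB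
  have hsT : (fun ω => lowerQuantile (F ω) α) ⁻¹' B = F ⁻¹' T := by
    ext ω
    simp only [hTdef, Set.mem_preimage, Set.mem_inter_iff, Set.mem_setOf_eq]
    exact ⟨fun h => ⟨h, (hprob ω).measure_univ⟩, fun h => h.1⟩
  rw [hsT, setIntegral_const, setIntegral_indicator hAmeas, setIntegral_const,
    smul_eq_mul, smul_eq_mul, mul_one, measureReal_def, measureReal_def, key T hTm, ENNReal.toReal_mul,
    ENNReal.toReal_ofReal hα.1.le]
  ring

end
end

section
/- In a prediction space in which all cumulative distribution functions in the class 𝓕 (containing F almost surely) are continuous and strictly increasing on a shared support interval, and Assumption (T) holds for all quantile functionals, CEP calibration and quantile calibration of the predictive distribution F are equivalent, and each implies probabilistic calibration of F. -/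
open MeasureTheory ProbabilityTheory

noncomputable section

variable {Ω : Type*} [MeasurableSpace Ω]

section AuxLemmas
open Set

lemma cdfAt_mono_s4 (G : Measure ℝ) [IsFiniteMeasure G] : Monotone (cdfAt G) := fun a b hab =>
  ENNReal.toReal_mono (measure_ne_top G _) (measure_mono (Iic_subset_Iic.2 hab))

lemma cdfAt_nonneg (G : Measure ℝ) (y : ℝ) : 0 ≤ cdfAt G y := ENNReal.toReal_nonneg

lemma cdfAt_le_one (G : Measure ℝ) [IsProbabilityMeasure G] (y : ℝ) : cdfAt G y ≤ 1 := by
  rw [cdfAt, show (1:ℝ) = (G Set.univ).toReal by simp]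
  exact ENNReal.toReal_mono (measure_ne_top G _) (measure_mono (subset_univ _))

lemma cdfAt_eq_cdf (G : Measure ℝ) [IsProbabilityMeasure G] : cdfAt G = ⇑(cdf G) := by
  funext x; rw [cdf_eq_real]; rfl

lemma measure_singleton_eq_zero_of_continuous_cdfAt (G : Measure ℝ) [IsProbabilityMeasure G]
    (hc : Continuous (cdfAt G)) (y : ℝ) : G {y} = 0 := by
  have key : ∀ n : ℕ, (G {y}).toReal ≤ cdfAt G y - cdfAt G (y - 1/(n+1)) := by
    intro n
    have hsub : Set.Iic (y - 1/(n+1)) ⊆ Set.Iic y := Iic_subset_Iic.2 (sub_le_self _ (by positivity))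
    have hdiff : G (Set.Iic y \ Set.Iic (y - 1/(n+1))) = G (Set.Iic y) - G (Set.Iic (y - 1/(n+1))) :=
      measure_diff hsub measurableSet_Iic.nullMeasurableSet (measure_ne_top G _)
    have hmem : {y} ⊆ Set.Iic y \ Set.Iic (y - 1/(n+1)) := by
      intro x hx; rcases hx with rfl
      constructor
      · exact self_mem_Iic
      · simp only [mem_Iic, not_le]; have : (0:ℝ) < 1/(n+1) := by positivity
        linarith
    calc (G {y}).toReal ≤ (G (Set.Iic y \ Set.Iic (y - 1/(n+1)))).toReal :=
          ENNReal.toReal_mono (measure_ne_top G _) (measure_mono hmem)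
      _ = cdfAt G y - cdfAt G (y - 1/(n+1)) := by
          rw [hdiff, ENNReal.toReal_sub_of_le (measure_mono hsub) (measure_ne_top G _)]; rfl
  have hlim : Filter.Tendsto (fun n : ℕ => cdfAt G y - cdfAt G (y - 1/(n+1))) Filter.atTop (nhds 0) := by
    have h1 : Filter.Tendsto (fun n : ℕ => y - 1/(n+1)) Filter.atTop (nhds y) := by
      have := tendsto_one_div_add_atTop_nhds_zero_nat (𝕜 := ℝ)
      simpa using Filter.Tendsto.const_sub y this
    have h2 := (hc.tendsto y).comp h1
    simpa using (tendsto_const_nhds (x := cdfAt G y)).sub h2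
  have hle : (G {y}).toReal ≤ 0 := le_of_tendsto_of_tendsto' tendsto_const_nhds hlim key
  have : (G {y}).toReal = 0 := le_antisymm hle ENNReal.toReal_nonneg
  exact (ENNReal.toReal_eq_zero_iff _).1 this |>.resolve_right (measure_ne_top G _)

lemma cdfLt_eq_cdfAt (G : Measure ℝ) [IsProbabilityMeasure G]
    (hc : Continuous (cdfAt G)) (y : ℝ) : cdfLt G y = cdfAt G y := by
  have h0 := measure_singleton_eq_zero_of_continuous_cdfAt G hc y
  have : Set.Iio y = Set.Iic y \ {y} := by
    ext x; simp [lt_iff_le_and_ne]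
  rw [cdfLt, this, measure_diff_null h0]; rfl

lemma quantile_struct {G : Measure ℝ} [IsProbabilityMeasure G] {S : Set ℝ}
    (hSord : S.OrdConnected) (hc : Continuous (cdfAt G)) (hm : StrictMonoOn (cdfAt G) S)
    (h0 : G Sᶜ = 0) {α : ℝ} (hα : α ∈ Set.Ioo (0:ℝ) 1) :
    ∃ q : ℝ, cdfAt G q = α ∧ lowerQuantile G α = q ∧ upperQuantile G α = q ∧
      (∀ y, cdfAt G y ≤ α ↔ y ≤ q) ∧ (∀ y, cdfAt G y = α → y = q) := by
  obtain ⟨hα0, hα1⟩ := hα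
  have hmono := cdfAt_mono_s4 G
  have hcdf := cdfAt_eq_cdf G
  have hbot : Filter.Tendsto (cdfAt G) Filter.atBot (nhds 0) := by
    rw [hcdf]; exact tendsto_cdf_atBot G
  have htop : Filter.Tendsto (cdfAt G) Filter.atTop (nhds 1) := by
    rw [hcdf]; exact tendsto_cdf_atTop G
  obtain ⟨a, ha⟩ : ∃ a, cdfAt G a < α := (hbot.eventually_lt_const hα0).exists
  obtain ⟨b, hb⟩ : ∃ b, α < cdfAt G b := (htop.eventually_const_lt hα1).exists
  have hab : a ≤ b := by
    by_contra h
    exact absurd (hmono (le_of_not_ge h)) (not_le.2 (lt_trans ha hb))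
  obtain ⟨q, _, hq⟩ := intermediate_value_Icc hab hc.continuousOn ⟨ha.le, hb.le⟩
  -- uniqueness
  have huniq : ∀ y, cdfAt G y = α → y = q := by
    have key : ∀ y₁ y₂, y₁ < y₂ → cdfAt G y₁ = α → cdfAt G y₂ = α → False := by
      intro y₁ y₂ hlt h₁ h₂
      obtain ⟨s₁, hs₁S, hs₁⟩ : ∃ s₁ ∈ S, s₁ ≤ y₁ := by
        by_contra h
        push_neg at h
        have hsub : Set.Iic y₁ ⊆ Sᶜ := fun x hx hxS => absurd (mem_Iic.1 hx) (not_le.2 (h x hxS))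
        have : G (Set.Iic y₁) = 0 := measure_mono_null hsub h0
        rw [cdfAt, this] at h₁; simp at h₁; exact absurd h₁.symm (ne_of_gt hα0)
      obtain ⟨s₂, hs₂S, hs₂⟩ : ∃ s₂ ∈ S, y₂ < s₂ := by
        by_contra h
        push_neg at h
        have hsub : Set.Ioi y₂ ⊆ Sᶜ := fun x hx hxS => absurd (h x hxS) (not_le.2 (mem_Ioi.1 hx))
        have hIoi : G (Set.Ioi y₂) = 0 := measure_mono_null hsub h0
        have hone : G (Set.Iic y₂) = 1 := by
          have := measure_add_measure_compl (μ := G) (measurableSet_Iic (a := y₂))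
          rw [Set.compl_Iic, hIoi, add_zero, measure_univ] at this
          exact this
        rw [cdfAt, hone] at h₂; simp at h₂; exact absurd h₂.symm (ne_of_lt hα1)
      have hy₁S : y₁ ∈ S := hSord.out hs₁S hs₂S ⟨hs₁, le_of_lt (lt_trans hlt hs₂)⟩
      have hy₂S : y₂ ∈ S := hSord.out hs₁S hs₂S ⟨le_trans hs₁ hlt.le, hs₂.le⟩
      have := hm hy₁S hy₂S hlt
      rw [h₁, h₂] at this; exact lt_irrefl α this
    intro y hy
    rcases lt_trichotomy y q with h | h | h
    · exact absurd (key y q h hy hq) not_false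
    · exact h
    · exact absurd (key q y h hq hy) not_false
  have hiff : ∀ y, cdfAt G y ≤ α ↔ y ≤ q := by
    intro y
    constructor
    · intro hy
      by_contra h
      have hqy : q < y := not_le.1 h
      have : α ≤ cdfAt G y := hq ▸ hmono hqy.le
      exact absurd (huniq y (le_antisymm hy this)) (ne_of_gt hqy)
    · intro hy
      calc cdfAt G y ≤ cdfAt G q := hmono hy
        _ = α := hq
  have hlow : lowerQuantile G α = q := by
    have hlb : ∀ x ∈ {x : ℝ | α ≤ cdfAt G x}, q ≤ x := by
      intro x hx
      by_contra h
      have hxq : x < q := not_le.1 h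
      have : cdfAt G x ≤ α := (hiff x).2 hxq.le
      exact absurd (huniq x (le_antisymm this hx)) (ne_of_lt hxq)
    have hqmem : q ∈ {x : ℝ | α ≤ cdfAt G x} := le_of_eq hq.symm
    exact le_antisymm (csInf_le ⟨q, hlb⟩ hqmem) (le_csInf ⟨q, hqmem⟩ hlb)
  have hup : upperQuantile G α = q := by
    have hset : {x : ℝ | cdfLt G x ≤ α} = Set.Iic q := by
      ext x
      rw [mem_setOf_eq, cdfLt_eq_cdfAt G hc x, hiff x, mem_Iic]
    rw [upperQuantile, hset, csSup_Iic]
  exact ⟨q, hq, hlow, hup, hiff, huniq⟩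

end AuxLemmas

/-- **Theorem (Statement 4).** If all CDFs in the class `𝓕` (containing `F` almost surely)
are continuous and strictly increasing on a shared support interval, and Assumption (T)
holds for all quantile functionals, then CEP calibration and quantile calibration are
equivalent, and each implies probabilistic calibration. -/
theorem cep_iff_quantile_and_implies_prob
    {Ω : Type*} [MeasurableSpace Ω] (μ : Measure Ω) [IsProbabilityMeasure μ]
    (F : Ω → Measure ℝ) (Y U : Ω → ℝ) (hps : IsPredictionSpace μ F Y U)
    (𝓕 : Set (Measure ℝ)) (hF𝓕 : ∀ᵐ ω ∂μ, F ω ∈ 𝓕)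
    (hcsi : CSI 𝓕)
    -- Assumption (T) for all quantile functionals:
    (hqmeas : ∀ α ∈ Set.Ioo (0:ℝ) 1, Measurable (qPairOf F α))
    (hqcond : ∀ α ∈ Set.Ioo (0:ℝ) 1, ∀ᵐ ω ∂μ,
      condDistrib Y (qPairOf F α) μ (qPairOf F α ω) ∈ 𝓕) :
    (CEPCalibrated μ F Y U ↔ QuantileCalibrated μ F Y) ∧
    (CEPCalibrated μ F Y U → ProbCalibrated μ F Y U) := by
  classical
  obtain ⟨S, -, hSord, hSprop⟩ := hcsi
  have hmeasY := hps.measY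
  -- measurability of the PIT
  have hκ : ∀ t : Set (Ω × ℝ), MeasurableSet t → Measurable (fun ω => F ω (Prod.mk ω ⁻¹' t)) := by
    intro t ht
    let κ : ProbabilityTheory.Kernel Ω ℝ := ⟨F, hps.measF⟩
    haveI : IsMarkovKernel κ := ⟨fun a => hps.probF a⟩
    exact ProbabilityTheory.Kernel.measurable_kernel_prodMk_left (κ := κ) ht
  have hcdfYmeas : Measurable fun ω => cdfAt (F ω) (Y ω) := by
    have h := hκ {p : Ω × ℝ | p.2 ≤ Y p.1}
      (measurableSet_le measurable_snd (hmeasY.comp measurable_fst))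
    have heq : (fun ω => F ω (Prod.mk ω ⁻¹' {p : Ω × ℝ | p.2 ≤ Y p.1}))
        = fun ω => F ω (Set.Iic (Y ω)) := rfl
    rw [heq] at h
    exact h.ennreal_toReal
  have hcdfLtYmeas : Measurable fun ω => cdfLt (F ω) (Y ω) := by
    have h := hκ {p : Ω × ℝ | p.2 < Y p.1}
      (measurableSet_lt measurable_snd (hmeasY.comp measurable_fst))
    have heq : (fun ω => F ω (Prod.mk ω ⁻¹' {p : Ω × ℝ | p.2 < Y p.1}))
        = fun ω => F ω (Set.Iio (Y ω)) := rfl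
    rw [heq] at h
    exact h.ennreal_toReal
  have hPITmeas : Measurable (PIT F Y U) :=
    hcdfLtYmeas.add (hps.measU.mul (hcdfYmeas.sub hcdfLtYmeas))
  -- structural facts about F ω, almost surely
  have hstructF : ∀ᵐ ω ∂μ, ∀ α ∈ Set.Ioo (0:ℝ) 1,
      (PIT F Y U ω ≤ α ↔ Y ω ≤ lowerQuantile (F ω) α) ∧
      upperQuantile (F ω) α = lowerQuantile (F ω) α ∧
      PIT F Y U ω = cdfAt (F ω) (Y ω) := by
    filter_upwards [hF𝓕] with ω hω
    intro α hα
    haveI := hps.probF ω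
    obtain ⟨hcont, hsm, h0⟩ := hSprop _ hω
    obtain ⟨q, hq, hlow, hup, hiff, -⟩ := quantile_struct hSord hcont hsm h0 hα
    have hPIT : PIT F Y U ω = cdfAt (F ω) (Y ω) := by
      rw [PIT, cdfLt_eq_cdfAt _ hcont]; ring
    refine ⟨?_, by rw [hup, hlow], hPIT⟩
    rw [hPIT, hlow]
    exact hiff (Y ω)
  -- the main per-level equivalence
  have main : ∀ α ∈ Set.Ioo (0:ℝ) 1,
      ((μ[Set.indicator {ω | PIT F Y U ω ≤ α} (fun _ => (1:ℝ)) |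
          MeasurableSpace.comap (fun ω => lowerQuantile (F ω) α) inferInstance]
          =ᵐ[μ] fun _ => α) ↔
        (∀ᵐ ω ∂μ,
          lowerQuantile (condDistrib Y (qPairOf F α) μ (qPairOf F α ω)) α
            = lowerQuantile (F ω) α ∧
          upperQuantile (condDistrib Y (qPairOf F α) μ (qPairOf F α ω)) α
            = upperQuantile (F ω) α)) := by
    intro α hα
    have hqP : Measurable (qPairOf F α) := hqmeas α hα
    have hℓmeas : Measurable fun ω => lowerQuantile (F ω) α := measurable_fst.comp hqP
    have hm1 : MeasurableSpace.comap (fun ω => lowerQuantile (F ω) α) inferInstance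
        ≤ (inferInstance : MeasurableSpace Ω) := hℓmeas.comap_le
    have hm2 : MeasurableSpace.comap (qPairOf F α) inferInstance
        ≤ (inferInstance : MeasurableSpace Ω) := hqP.comap_le
    have hm12 : MeasurableSpace.comap (fun ω => lowerQuantile (F ω) α) inferInstance
        ≤ MeasurableSpace.comap (qPairOf F α) inferInstance := by
      rintro s ⟨C, hC, rfl⟩
      exact ⟨Prod.fst ⁻¹' C, measurable_fst hC, rfl⟩
    set A : Set Ω := {ω | Y ω ≤ lowerQuantile (F ω) α} with hAdef
    have hA : MeasurableSet A := measurableSet_le hmeasY hℓmeas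
    have hIndInt : Integrable (Set.indicator A fun _ => (1:ℝ)) μ :=
      (integrable_const 1).indicator hA
    -- a.e. equality of the two indicators
    have hAA' : Set.indicator {ω | PIT F Y U ω ≤ α} (fun _ => (1:ℝ))
        =ᵐ[μ] Set.indicator A fun _ => (1:ℝ) := by
      filter_upwards [hstructF] with ω hω
      have h1 := (hω α hα).1
      simp only [Set.indicator_apply, Set.mem_setOf_eq, hAdef]
      by_cases h : PIT F Y U ω ≤ α
      · rw [if_pos h, if_pos (h1.1 h)]
      · rw [if_neg h, if_neg fun hc => h (h1.2 hc)]
    have h3' : ∀ᵐ ω ∂μ, qPairOf F α ω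
        = (lowerQuantile (F ω) α, lowerQuantile (F ω) α) := by
      filter_upwards [hstructF] with ω hω
      rw [qPairOf, (hω α hα).2.1]
    -- K1: conditional expectation given the pair as cdf of the conditional distribution
    have K1 : μ[Set.indicator A fun _ => (1:ℝ) |
        MeasurableSpace.comap (qPairOf F α) inferInstance] =ᵐ[μ]
        fun ω => cdfAt (condDistrib Y (qPairOf F α) μ (qPairOf F α ω))
          (lowerQuantile (F ω) α) := by
      have hB : MeasurableSet {p : (ℝ × ℝ) × ℝ | p.2 ≤ p.1.1} :=
        measurableSet_le measurable_snd (measurable_fst.comp measurable_fst)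
      haveI : IsProbabilityMeasure (μ.map fun ω => (qPairOf F α ω, Y ω)) :=
        Measure.isProbabilityMeasure_map (hqP.prodMk hmeasY).aemeasurable
      have hf_int : Integrable
          (Set.indicator {p : (ℝ × ℝ) × ℝ | p.2 ≤ p.1.1} fun _ => (1:ℝ))
          (μ.map fun ω => (qPairOf F α ω, Y ω)) := (integrable_const 1).indicator hB
      have hmain := condExp_prod_ae_eq_integral_condDistrib' (μ := μ) hqP
        hmeasY.aemeasurable hf_int
      have hfun : (fun ω => Set.indicator {p : (ℝ × ℝ) × ℝ | p.2 ≤ p.1.1}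
          (fun _ => (1:ℝ)) (qPairOf F α ω, Y ω)) = Set.indicator A fun _ => (1:ℝ) := by
        funext ω
        simp only [Set.indicator_apply, Set.mem_setOf_eq, hAdef]
        rfl
      rw [hfun] at hmain
      refine hmain.trans (Filter.EventuallyEq.of_eq ?_)
      funext ω
      have hind : (fun y => Set.indicator {p : (ℝ × ℝ) × ℝ | p.2 ≤ p.1.1}
          (fun _ => (1:ℝ)) (qPairOf F α ω, y))
          = Set.indicator (Set.Iic (lowerQuantile (F ω) α)) fun _ => (1:ℝ) := by
        funext y
        simp only [Set.indicator_apply, Set.mem_setOf_eq, Set.mem_Iic]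
        rfl
      rw [hind, integral_indicator_const (1:ℝ) measurableSet_Iic, smul_eq_mul, mul_one]
      rfl
    -- K2a : from the pair down to the lower quantile
    have K2a : (μ[Set.indicator A fun _ => (1:ℝ) |
          MeasurableSpace.comap (qPairOf F α) inferInstance] =ᵐ[μ] fun _ => α) →
        (μ[Set.indicator A fun _ => (1:ℝ) |
          MeasurableSpace.comap (fun ω => lowerQuantile (F ω) α) inferInstance]
          =ᵐ[μ] fun _ => α) := by
      intro hc2
      have htower := condExp_condExp_of_le (μ := μ)
        (f := Set.indicator A fun _ => (1:ℝ)) hm12 hm2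
      refine htower.symm.trans ((condExp_congr_ae hc2).trans ?_)
      rw [condExp_const hm1]
    -- K2b : from the lower quantile up to the pair
    have K2b : (μ[Set.indicator A fun _ => (1:ℝ) |
          MeasurableSpace.comap (fun ω => lowerQuantile (F ω) α) inferInstance]
          =ᵐ[μ] fun _ => α) →
        (μ[Set.indicator A fun _ => (1:ℝ) |
          MeasurableSpace.comap (qPairOf F α) inferInstance] =ᵐ[μ] fun _ => α) := by
      intro hc1
      refine (ae_eq_condExp_of_forall_setIntegral_eq hm2 hIndInt
        (fun s _ _ => (integrable_const α).integrableOn) ?_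
        stronglyMeasurable_const.aestronglyMeasurable).symm
      rintro s ⟨B, hB, rfl⟩ -
      have hCmeas : MeasurableSet ((fun x : ℝ => (x, x)) ⁻¹' B) :=
        (measurable_id.prodMk measurable_id) hB
      have hseq : qPairOf F α ⁻¹' B
          =ᵐ[μ] (fun ω => lowerQuantile (F ω) α) ⁻¹' ((fun x : ℝ => (x, x)) ⁻¹' B) := by
        apply Filter.eventuallyEq_set.2
        filter_upwards [h3'] with ω hω
        simp only [Set.mem_preimage, hω]
      have hCm1 : MeasurableSet[MeasurableSpace.comap
          (fun ω => lowerQuantile (F ω) α) inferInstance]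
          ((fun ω => lowerQuantile (F ω) α) ⁻¹' ((fun x : ℝ => (x, x)) ⁻¹' B)) :=
        ⟨_, hCmeas, rfl⟩
      calc ∫ x in qPairOf F α ⁻¹' B, (fun _ => α) x ∂μ
          = ∫ x in (fun ω => lowerQuantile (F ω) α) ⁻¹' ((fun x : ℝ => (x, x)) ⁻¹' B),
            (fun _ => α) x ∂μ := setIntegral_congr_set hseq
        _ = ∫ x in (fun ω => lowerQuantile (F ω) α) ⁻¹' ((fun x : ℝ => (x, x)) ⁻¹' B),
            (μ[Set.indicator A fun _ => (1:ℝ) |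
              MeasurableSpace.comap (fun ω => lowerQuantile (F ω) α) inferInstance]) x ∂μ :=
            setIntegral_congr_ae (hℓmeas hCmeas) (hc1.mono fun x hx _ => hx.symm)
        _ = ∫ x in (fun ω => lowerQuantile (F ω) α) ⁻¹' ((fun x : ℝ => (x, x)) ⁻¹' B),
            Set.indicator A (fun _ => (1:ℝ)) x ∂μ := setIntegral_condExp hm1 hIndInt hCm1
        _ = ∫ x in qPairOf F α ⁻¹' B, Set.indicator A (fun _ => (1:ℝ)) x ∂μ :=
            setIntegral_congr_set hseq.symm
    -- structure of the conditional distribution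
    have hstructν : ∀ᵐ ω ∂μ, ∃ q : ℝ,
        cdfAt (condDistrib Y (qPairOf F α) μ (qPairOf F α ω)) q = α ∧
        lowerQuantile (condDistrib Y (qPairOf F α) μ (qPairOf F α ω)) α = q ∧
        upperQuantile (condDistrib Y (qPairOf F α) μ (qPairOf F α ω)) α = q ∧
        (∀ y, cdfAt (condDistrib Y (qPairOf F α) μ (qPairOf F α ω)) y ≤ α ↔ y ≤ q) ∧
        (∀ y, cdfAt (condDistrib Y (qPairOf F α) μ (qPairOf F α ω)) y = α → y = q) := by
      filter_upwards [hqcond α hα] with ω hω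
      obtain ⟨hcont, hsm, h0⟩ := hSprop _ hω
      exact quantile_struct hSord hcont hsm h0 hα
    -- assemble the equivalence
    constructor
    · intro hcep
      have hc1 : μ[Set.indicator A fun _ => (1:ℝ) |
          MeasurableSpace.comap (fun ω => lowerQuantile (F ω) α) inferInstance]
          =ᵐ[μ] fun _ => α := (condExp_congr_ae hAA').symm.trans hcep
      have hc2 := K2b hc1
      have hcdfν : ∀ᵐ ω ∂μ,
          cdfAt (condDistrib Y (qPairOf F α) μ (qPairOf F α ω))
            (lowerQuantile (F ω) α) = α := K1.symm.trans hc2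
      filter_upwards [hcdfν, hstructν, hstructF] with ω hω hν hωF
      obtain ⟨q, hqcdf, hqlow, hqup, -, huniq⟩ := hν
      have hq : lowerQuantile (F ω) α = q := huniq _ hω
      exact ⟨hqlow.trans hq.symm, by rw [hqup, ← hq, (hωF α hα).2.1]⟩
    · intro hq
      have hcdfν : ∀ᵐ ω ∂μ,
          cdfAt (condDistrib Y (qPairOf F α) μ (qPairOf F α ω))
            (lowerQuantile (F ω) α) = α := by
        filter_upwards [hq, hstructν] with ω hω hν
        obtain ⟨q, hqcdf, hqlow, -, -, -⟩ := hν
        rw [← hω.1, hqlow, hqcdf]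
      have hc2 : μ[Set.indicator A fun _ => (1:ℝ) |
          MeasurableSpace.comap (qPairOf F α) inferInstance] =ᵐ[μ] fun _ => α :=
        K1.trans hcdfν
      exact (condExp_congr_ae hAA').trans (K2a hc2)
  refine ⟨⟨fun h α hα => (main α hα).1 (h α hα), fun h α hα => (main α hα).2 (h α hα)⟩, ?_⟩
  -- CEP calibration implies probabilistic calibration
  intro hcep
  have hcdfPIT : ∀ α ∈ Set.Ioo (0:ℝ) 1,
      μ {ω | PIT F Y U ω ≤ α} = ENNReal.ofReal α := by
    intro α hα
    have hℓmeas : Measurable fun ω => lowerQuantile (F ω) α :=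
      measurable_fst.comp (hqmeas α hα)
    have hm1 : MeasurableSpace.comap (fun ω => lowerQuantile (F ω) α) inferInstance
        ≤ (inferInstance : MeasurableSpace Ω) := hℓmeas.comap_le
    have hs : MeasurableSet {ω | PIT F Y U ω ≤ α} :=
      measurableSet_le hPITmeas measurable_const
    have hint : Integrable (Set.indicator {ω | PIT F Y U ω ≤ α} fun _ => (1:ℝ)) μ :=
      (integrable_const 1).indicator hs
    have h1 : ∫ ω, Set.indicator {ω | PIT F Y U ω ≤ α} (fun _ => (1:ℝ)) ω ∂μ = α := by
      rw [← integral_condExp hm1, integral_congr_ae (hcep α hα)]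
      simp
    rw [integral_indicator_const (1:ℝ) hs, smul_eq_mul, mul_one] at h1
    rw [← ENNReal.ofReal_toReal (measure_ne_top μ {ω | PIT F Y U ω ≤ α}), ← measureReal_def, h1]
  have hPITbound : ∀ᵐ ω ∂μ, 0 ≤ PIT F Y U ω ∧ PIT F Y U ω ≤ 1 := by
    filter_upwards [hF𝓕] with ω hω
    haveI := hps.probF ω
    obtain ⟨hcont, -, -⟩ := hSprop _ hω
    have hPIT : PIT F Y U ω = cdfAt (F ω) (Y ω) := by
      rw [PIT, cdfLt_eq_cdfAt _ hcont]; ring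
    rw [hPIT]
    exact ⟨cdfAt_nonneg _ _, cdfAt_le_one _ _⟩
  haveI : IsProbabilityMeasure (μ.map (PIT F Y U)) :=
    Measure.isProbabilityMeasure_map hPITmeas.aemeasurable
  haveI : IsFiniteMeasure unif01 := by
    constructor
    rw [unif01, Measure.restrict_apply MeasurableSet.univ, Set.univ_inter, Real.volume_Icc]
    simp
  refine Measure.ext_of_Iic _ _ fun t => ?_
  rw [Measure.map_apply hPITmeas measurableSet_Iic]
  have hpre : PIT F Y U ⁻¹' Set.Iic t = {ω | PIT F Y U ω ≤ t} := rfl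
  rw [hpre, unif01, Measure.restrict_apply measurableSet_Iic]
  rcases le_or_gt t 0 with ht | ht
  · have hr : Set.Iic t ∩ Set.Icc (0:ℝ) 1 ⊆ Set.Icc 0 t := fun x hx => ⟨hx.2.1, hx.1⟩
    have hv : volume (Set.Iic t ∩ Set.Icc (0:ℝ) 1) = 0 := by
      refine le_antisymm (le_trans (measure_mono hr) ?_) zero_le
      rw [Real.volume_Icc]
      exact le_of_eq (ENNReal.ofReal_eq_zero.2 (by linarith))
    rw [hv]
    by_contra hne
    have hc0 : 0 < (μ {ω | PIT F Y U ω ≤ t}).toReal :=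
      ENNReal.toReal_pos hne (measure_ne_top μ _)
    set c := (μ {ω | PIT F Y U ω ≤ t}).toReal with hcdef
    have hβmem : min (c/2) (1/2) ∈ Set.Ioo (0:ℝ) 1 :=
      ⟨lt_min (by linarith) (by norm_num),
        lt_of_le_of_lt (min_le_right _ _) (by norm_num)⟩
    have hle : μ {ω | PIT F Y U ω ≤ t} ≤ ENNReal.ofReal (min (c/2) (1/2)) := by
      rw [← hcdfPIT _ hβmem]
      exact measure_mono fun ω (hω : PIT F Y U ω ≤ t) =>
        le_trans hω (le_trans ht hβmem.1.le)
    have h4 := ENNReal.toReal_mono ENNReal.ofReal_ne_top hle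
    rw [ENNReal.toReal_ofReal hβmem.1.le] at h4
    have : c ≤ c / 2 := le_trans h4 (min_le_left _ _)
    linarith
  · rcases lt_or_ge t 1 with ht1 | ht1
    · rw [hcdfPIT t ⟨ht, ht1⟩]
      have hset : Set.Iic t ∩ Set.Icc (0:ℝ) 1 = Set.Icc 0 t := by
        ext x
        simp only [Set.mem_inter_iff, Set.mem_Iic, Set.mem_Icc]
        exact ⟨fun h => ⟨h.2.1, h.1⟩, fun h => ⟨h.2, h.1, le_trans h.2 ht1.le⟩⟩
      rw [hset, Real.volume_Icc, sub_zero]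
    · have hset : Set.Iic t ∩ Set.Icc (0:ℝ) 1 = Set.Icc 0 1 := by
        ext x
        simp only [Set.mem_inter_iff, Set.mem_Iic, Set.mem_Icc]
        exact ⟨fun h => h.2, fun h => ⟨le_trans h.2 ht1, h⟩⟩
      rw [hset, Real.volume_Icc]
      have hae : ∀ᵐ ω ∂μ, ω ∈ {ω | PIT F Y U ω ≤ t} :=
        hPITbound.mono fun ω h => le_trans h.2 ht1
      have hμ1 : μ {ω | PIT F Y U ω ≤ t} = 1 :=
        (measure_congr (Filter.eventuallyEq_univ.2 hae)).trans measure_univ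
      rw [hμ1]
      simp


end
end
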